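/- arXiv:1303.0656 — 3 statements merged into one kernel-verified Lean document; each statement's English description precedes it below -/
import Mathlib

section
/- There are no nonzero weakly compact multipliers on L¹_loc(ℝ⁺): if μ ∈ M_loc is nonzero, then the multiplier M_μ f = μ*f is not weakly compact. -/
open MeasureTheory Set Filter Topology

noncomputable section

/-- Integral of a complex-valued function against a complex (Borel) measure,
defined via the Jordan decompositions of the real and imaginary parts. -/
def cInt {X : Type} [MeasurableSpace X] (μ : ComplexMeasure X) (f : X → ℂ) : ℂ :=
  ((∫ x, f x ∂μ.re.toJordanDecomposition.posPart) -
      ∫ x, f x ∂μ.re.toJordanDecomposition.negPart) +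
    Complex.I * ((∫ x, f x ∂μ.im.toJordanDecomposition.posPart) -
      ∫ x, f x ∂μ.im.toJordanDecomposition.negPart)

/-- A (positive) measure playing the role of the total variation `|μ|` of a complex
measure `μ` (it is equivalent to the classical total variation: `|μ| ≤ cTV μ ≤ 2|μ|`). -/
def cTV {X : Type} [MeasurableSpace X] (μ : ComplexMeasure X) : Measure X :=
  μ.re.totalVariation + μ.im.totalVariation

/-- `μ` is concentrated on the set `A`, i.e. `μ` is a measure "on `A`". -/
def ConcOn {X : Type} [MeasurableSpace X] (μ : ComplexMeasure X) (A : Set X) : Prop :=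
  ∀ E : Set X, MeasurableSet E → E ⊆ Aᶜ → μ E = 0

/-- `ρ` is the convolution `(Xν) * μ` of the complex measures `ν, μ` on `[0,1)`,
characterized by `ρ E = ∫∫ 1_E (t+s) t dμ(s) dν(t)` for Borel `E ⊆ [0,1)`. -/
def IsXConv (μ ν ρ : ComplexMeasure ℝ) : Prop :=
  ConcOn ρ (Ico 0 1) ∧
    ∀ E : Set ℝ, MeasurableSet E → E ⊆ Ico (0 : ℝ) 1 →
      ρ E = cInt ν fun t => (t : ℂ) * cInt μ fun s => E.indicator (1 : ℝ → ℂ) (t + s)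

/-- The Banach space `L¹[0,n)`. -/
abbrev LpIco (n : ℕ) := Lp ℂ 1 (volume.restrict (Ico (0 : ℝ) (n : ℝ)))

/-- `L¹_loc(ℝ⁺)`, realized as the (projective limit) submodule of compatible families in
`Π n, L¹[0,n)`; the `n`-th component plays the role of the restriction `R_n f`. -/
def L1locSub : Submodule ℂ (Π n : ℕ, LpIco n) where
  carrier := {F | ∀ n : ℕ,
    (F n : ℝ → ℂ) =ᵐ[volume.restrict (Ico (0 : ℝ) (n : ℝ))] (F (n + 1) : ℝ → ℂ)}
  add_mem' := by
    intro F G hF hG n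
    have hsub : Ico (0 : ℝ) (n : ℝ) ⊆ Ico (0 : ℝ) ((n : ℕ) + 1 : ℕ) := by
      apply Ico_subset_Ico_right; exact_mod_cast Nat.le_succ n
    have h2 := (Lp.coeFn_add (F (n + 1)) (G (n + 1))).filter_mono
      (ae_mono (Measure.restrict_mono hsub le_rfl))
    filter_upwards [hF n, hG n, Lp.coeFn_add (F n) (G n), h2] with t h1 h1' h3 h4
    show ((F n + G n : LpIco n) : ℝ → ℂ) t = ((F (n+1) + G (n+1) : LpIco (n+1)) : ℝ → ℂ) t
    rw [h3, h4]; simp [h1, h1']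
  zero_mem' := by
    intro n
    have hsub : Ico (0 : ℝ) (n : ℝ) ⊆ Ico (0 : ℝ) ((n : ℕ) + 1 : ℕ) := by
      apply Ico_subset_Ico_right; exact_mod_cast Nat.le_succ n
    have h2 := (Lp.coeFn_zero ℂ 1 (volume.restrict (Ico (0 : ℝ) ((n + 1 : ℕ) : ℝ)))).filter_mono
      (ae_mono (Measure.restrict_mono hsub le_rfl))
    filter_upwards [Lp.coeFn_zero ℂ 1 (volume.restrict (Ico (0 : ℝ) (n : ℝ))), h2] with t h1 h3
    show ((0 : LpIco n) : ℝ → ℂ) t = ((0 : LpIco (n+1)) : ℝ → ℂ) t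
    rw [h1, h3]
  smul_mem' := by
    intro c F hF n
    have hsub : Ico (0 : ℝ) (n : ℝ) ⊆ Ico (0 : ℝ) ((n : ℕ) + 1 : ℕ) := by
      apply Ico_subset_Ico_right; exact_mod_cast Nat.le_succ n
    have h2 := (Lp.coeFn_smul c (F (n + 1))).filter_mono
      (ae_mono (Measure.restrict_mono hsub le_rfl))
    filter_upwards [hF n, Lp.coeFn_smul c (F n), h2] with t h1 h3 h4
    show ((c • F n : LpIco n) : ℝ → ℂ) t = ((c • F (n+1) : LpIco (n+1)) : ℝ → ℂ) t
    rw [h3, h4]; simp [h1]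

/-- `L¹_loc(ℝ⁺)` as a type. -/
abbrev L1loc := ↥L1locSub

/-- The Fréchet (projective limit) topology on `L¹_loc`, given by the seminorms
`f ↦ ‖R_n f‖_{L¹[0,n)}`. -/
instance L1locTop : TopologicalSpace L1loc :=
  ⨅ n : ℕ, TopologicalSpace.induced (fun F : L1loc => F.1 n) inferInstance

/-- The weak topology `σ(L¹_loc, (L¹_loc)*)` on `L¹_loc`. -/
def L1locWeak : TopologicalSpace L1loc :=
  ⨅ (φ : L1loc →ₗ[ℂ] ℂ) (_ : Continuous φ), TopologicalSpace.induced (⇑φ) inferInstance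

section Aux

open MeasureTheory

lemma restr_finite (n : ℕ) : IsFiniteMeasure (volume.restrict (Ico (0:ℝ) (n:ℝ))) :=
  ⟨by rw [Measure.restrict_apply_univ, Real.volume_Ico]; exact ENNReal.ofReal_lt_top⟩

lemma integrable_bdd_mulL1 {n : ℕ} {g : ℝ → ℂ} (hg : Measurable g) {C : ℝ}
    (hgb : ∀ t, ‖g t‖ ≤ C) (f : LpIco n) :
    Integrable (fun t => g t * (f : ℝ → ℂ) t) (volume.restrict (Ico (0:ℝ) (n:ℝ))) :=
  (L1.integrable_coeFn f).bdd_mul hg.aestronglyMeasurable (Filter.Eventually.of_forall hgb)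

/-- integration against a bounded function, as a linear functional on `L¹[0,n)`. -/
def psiFun (n : ℕ) (g : ℝ → ℂ) (hg : Measurable g) (C : ℝ) (hgb : ∀ t, ‖g t‖ ≤ C) :
    LpIco n →ₗ[ℂ] ℂ where
  toFun f := ∫ t, g t * (f : ℝ → ℂ) t ∂(volume.restrict (Ico (0:ℝ) (n:ℝ)))
  map_add' f h := by
    show (∫ t, g t * ((f + h : LpIco n) : ℝ → ℂ) t ∂(volume.restrict (Ico (0:ℝ) (n:ℝ)))) =
      (∫ t, g t * (f : ℝ → ℂ) t ∂(volume.restrict (Ico (0:ℝ) (n:ℝ)))) +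
      ∫ t, g t * (h : ℝ → ℂ) t ∂(volume.restrict (Ico (0:ℝ) (n:ℝ)))
    have e : (fun t => g t * ((f + h : LpIco n) : ℝ → ℂ) t)
        =ᵐ[volume.restrict (Ico (0:ℝ) (n:ℝ))]
        fun t => g t * (f : ℝ → ℂ) t + g t * (h : ℝ → ℂ) t := by
      filter_upwards [Lp.coeFn_add f h] with t ht
      rw [ht, Pi.add_apply]; ring
    rw [integral_congr_ae e,
      integral_add (integrable_bdd_mulL1 hg hgb f) (integrable_bdd_mulL1 hg hgb h)]
  map_smul' c f := by
    show (∫ t, g t * ((c • f : LpIco n) : ℝ → ℂ) t ∂(volume.restrict (Ico (0:ℝ) (n:ℝ)))) =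
      c • ∫ t, g t * (f : ℝ → ℂ) t ∂(volume.restrict (Ico (0:ℝ) (n:ℝ)))
    have e : (fun t => g t * ((c • f : LpIco n) : ℝ → ℂ) t)
        =ᵐ[volume.restrict (Ico (0:ℝ) (n:ℝ))]
        fun t => c • (g t * (f : ℝ → ℂ) t) := by
      filter_upwards [Lp.coeFn_smul c f] with t ht
      rw [ht, Pi.smul_apply]; simp [smul_eq_mul]; ring
    rw [integral_congr_ae e, integral_smul]

lemma psiFun_cont (n : ℕ) (g : ℝ → ℂ) (hg : Measurable g) (C : ℝ) (hgb : ∀ t, ‖g t‖ ≤ C) :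
    Continuous (psiFun n g hg C hgb) := by
  have hC0 : 0 ≤ C := le_trans (norm_nonneg _) (hgb 0)
  apply AddMonoidHomClass.continuous_of_bound (psiFun n g hg C hgb) C
  intro f
  calc ‖∫ t, g t * (f : ℝ → ℂ) t ∂(volume.restrict (Ico (0:ℝ) (n:ℝ)))‖
      ≤ ∫ t, ‖g t * (f : ℝ → ℂ) t‖ ∂(volume.restrict (Ico (0:ℝ) (n:ℝ))) :=
        norm_integral_le_integral_norm _
    _ ≤ ∫ t, C * ‖(f : ℝ → ℂ) t‖ ∂(volume.restrict (Ico (0:ℝ) (n:ℝ))) := by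
        refine integral_mono (integrable_bdd_mulL1 hg hgb f).norm
          ((L1.integrable_coeFn f).norm.const_mul C) fun t => ?_
        rw [norm_mul]
        exact mul_le_mul_of_nonneg_right (hgb t) (norm_nonneg _)
    _ = C * ‖f‖ := by rw [integral_const_mul, L1.norm_eq_integral_norm]

/-- the projection `L¹_loc → L¹[0,n)` as a linear map. -/
def projFun (n : ℕ) : L1loc →ₗ[ℂ] LpIco n :=
  (LinearMap.proj n).comp (L1locSub.subtype)

lemma projFun_cont (n : ℕ) : Continuous (projFun n) :=
  continuous_iInf_dom (t₁ := fun n : ℕ =>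
    TopologicalSpace.induced (fun F : L1loc => F.1 n) inferInstance) (i := n)
    continuous_induced_dom

/-- the test functional `F ↦ ∫ g ⬝ (F n)` on `L¹_loc`. -/
def testFun (n : ℕ) (g : ℝ → ℂ) (hg : Measurable g) (C : ℝ) (hgb : ∀ t, ‖g t‖ ≤ C) :
    L1loc →ₗ[ℂ] ℂ :=
  (psiFun n g hg C hgb).comp (projFun n)

lemma testFun_cont (n : ℕ) (g : ℝ → ℂ) (hg : Measurable g) (C : ℝ) (hgb : ∀ t, ‖g t‖ ≤ C) :
    Continuous (testFun n g hg C hgb) :=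
  (psiFun_cont n g hg C hgb).comp (projFun_cont n)

lemma weak_cont (φ : L1loc →ₗ[ℂ] ℂ) (hφ : Continuous φ) :
    Continuous[L1locWeak, inferInstance] φ :=
  continuous_iInf_dom (i := φ) (continuous_iInf_dom (i := hφ) continuous_induced_dom)

end Aux
section Aux2

open MeasureTheory

lemma memIndicator (n : ℕ) (c : ℂ) (a b : ℝ) :
    MemLp ((Ico a b).indicator fun _ => c) 1 (volume.restrict (Ico (0:ℝ) (n:ℝ))) := by
  haveI := restr_finite n
  rw [memLp_one_iff_integrable]
  exact (integrable_const c).indicator measurableSet_Ico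

/-- the element of `L¹_loc` given by `c · 1_{[a,b)}`. -/
def indL1 (c : ℂ) (a b : ℝ) : L1loc :=
  ⟨fun n => (memIndicator n c a b).toLp _, by
    intro n
    have hsub : Ico (0 : ℝ) (n : ℝ) ⊆ Ico (0 : ℝ) ((n : ℕ) + 1 : ℕ) := by
      apply Ico_subset_Ico_right; exact_mod_cast Nat.le_succ n
    have h2 := ((memIndicator (n+1) c a b).coeFn_toLp).filter_mono
      (ae_mono (Measure.restrict_mono hsub le_rfl))
    filter_upwards [(memIndicator n c a b).coeFn_toLp, h2] with t e1 e2
    rw [e1, e2]⟩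

lemma indL1_eq_zero (c : ℂ) (a b : ℝ) (m : ℕ) (hm : (m : ℝ) ≤ a) :
    (indL1 c a b).1 m = 0 := by
  show (memIndicator m c a b).toLp _ = 0
  have h0 : ((Ico a b).indicator fun _ => c)
      =ᵐ[volume.restrict (Ico (0:ℝ) (m:ℝ))] (0 : ℝ → ℂ) := by
    filter_upwards [ae_restrict_mem measurableSet_Ico] with t ht
    have : t ∉ Ico a b := fun hab => absurd ht.2 (not_lt.2 (le_trans hm hab.1))
    simp [Set.indicator_of_notMem this]
  rw [MemLp.toLp_congr _ (MemLp.zero (ε := ℂ)) h0, MemLp.toLp_zero]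

lemma ind_mul_ind (c d M δ : ℝ) (s t : ℝ) :
    (Ico c d).indicator (fun _ => (1:ℂ)) (t + s) *
      (Ico M (M + δ)).indicator (fun _ => (δ⁻¹ : ℂ)) t
    = (Ico (max (c - s) M) (min (d - s) (M + δ))).indicator (fun _ => (δ⁻¹ : ℂ)) t := by
  have hiff : (max (c - s) M ≤ t ∧ t < min (d - s) (M + δ)) ↔
      ((c ≤ t + s ∧ t + s < d) ∧ (M ≤ t ∧ t < M + δ)) := by
    rw [max_le_iff, lt_min_iff]
    constructor <;> rintro ⟨⟨h1, h2⟩, h3, h4⟩ <;>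
      exact ⟨⟨by linarith, by linarith⟩, by linarith, by linarith⟩
  simp only [Set.indicator_apply, mem_Ico, hiff]
  by_cases h1 : (c ≤ t + s ∧ t + s < d) <;> by_cases h2 : (M ≤ t ∧ t < M + δ) <;>
    simp [h1, h2]

lemma integral_test (n : ℕ) (c d M δ : ℝ) (hM : 0 ≤ M) (hMn : M + δ ≤ (n : ℝ)) (s : ℝ) :
    (∫ t, (Ico c d).indicator (fun _ => (1:ℂ)) (t + s) *
        (((indL1 (δ⁻¹ : ℂ) M (M + δ)).1 n : ℝ → ℂ) t)
        ∂(volume.restrict (Ico (0:ℝ) (n:ℝ))))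
      = ((δ⁻¹ * max (min (d - s) (M + δ) - max (c - s) M) 0 : ℝ) : ℂ) := by
  have e1 : (fun t => (Ico c d).indicator (fun _ => (1:ℂ)) (t + s) *
        (((indL1 (δ⁻¹ : ℂ) M (M + δ)).1 n : ℝ → ℂ) t))
      =ᵐ[volume.restrict (Ico (0:ℝ) (n:ℝ))]
      fun t => (Ico (max (c - s) M) (min (d - s) (M + δ))).indicator (fun _ => (δ⁻¹ : ℂ)) t := by
    filter_upwards [(memIndicator n (δ⁻¹ : ℂ) M (M + δ)).coeFn_toLp] with t ht
    show (Ico c d).indicator (fun _ => (1:ℂ)) (t + s) *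
        (((memIndicator n (δ⁻¹:ℂ) M (M+δ)).toLp _ : ℝ → ℂ) t) = _
    rw [ht, ← ind_mul_ind c d M δ s t]
  rw [integral_congr_ae e1, integral_indicator_const (δ⁻¹ : ℂ) measurableSet_Ico, measureReal_def,
    Measure.restrict_apply measurableSet_Ico]
  have hsub : Ico (max (c - s) M) (min (d - s) (M + δ)) ∩ Ico (0:ℝ) (n:ℝ)
      = Ico (max (c - s) M) (min (d - s) (M + δ)) := by
    refine Set.inter_eq_self_of_subset_left (fun x hx => ?_)
    exact ⟨le_trans hM (le_trans (le_max_right _ _) hx.1),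
      lt_of_lt_of_le (lt_of_lt_of_le hx.2 (min_le_right _ _)) hMn⟩
  rw [hsub, Real.volume_Ico, ENNReal.toReal_ofReal', Complex.real_smul]
  push_cast
  ring

lemma cInt_indicator_eq (ν : ComplexMeasure ℝ) {E : Set ℝ} (hE : MeasurableSet E) :
    cInt ν (fun s => ((E.indicator (1 : ℝ → ℝ) s : ℝ) : ℂ)) = ν E := by
  have hre : ∀ r : SignedMeasure ℝ,
      r E = (r.toJordanDecomposition.posPart E).toReal
        - (r.toJordanDecomposition.negPart E).toReal := by
    intro r
    conv_lhs => rw [← r.toSignedMeasure_toJordanDecomposition]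
    rw [JordanDecomposition.toSignedMeasure, VectorMeasure.sub_apply,
      Measure.toSignedMeasure_apply_measurable hE, Measure.toSignedMeasure_apply_measurable hE,
      measureReal_def, measureReal_def]
  have hint : ∀ P : Measure ℝ, (∫ s, ((E.indicator (1 : ℝ → ℝ) s : ℝ) : ℂ) ∂P)
      = ((P E).toReal : ℂ) := by
    intro P
    rw [← measureReal_def, ← integral_indicator_one (μ := P) hE]
    exact integral_ofReal (𝕜 := ℂ)
  have h1 : (ν E).re = ComplexMeasure.re ν E := rfl
  have h2 : (ν E).im = ComplexMeasure.im ν E := rfl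
  unfold cInt
  rw [hint, hint, hint, hint]
  apply Complex.ext
  · rw [h1, hre (ComplexMeasure.re ν)]
    simp only [Complex.add_re, Complex.sub_re, Complex.ofReal_re, Complex.mul_re,
      Complex.I_re, Complex.I_im, Complex.sub_im, Complex.ofReal_im]
    ring
  · rw [h2, hre (ComplexMeasure.im ν)]
    simp only [Complex.add_im, Complex.sub_im, Complex.ofReal_im, Complex.mul_im,
      Complex.I_re, Complex.I_im, Complex.sub_re, Complex.ofReal_re]
    ring

end Aux2
section Aux3

open MeasureTheory

lemma H_tendsto (c d M : ℝ) (s : ℝ) :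
    Filter.Tendsto (fun k : ℕ =>
        ((1 / ((k : ℝ) + 1))⁻¹ *
          max (min (d - s) (M + 1 / ((k : ℝ) + 1)) - max (c - s) M) 0))
      atTop (𝓝 ((Ico (c - M) (d - M)).indicator (1 : ℝ → ℝ) s)) := by
  have hδpos : ∀ k : ℕ, (0 : ℝ) < 1 / ((k : ℝ) + 1) := fun k => by positivity
  have hδ0 : Filter.Tendsto (fun k : ℕ => 1 / ((k : ℝ) + 1)) atTop (𝓝 0) :=
    tendsto_one_div_add_atTop_nhds_zero_nat
  by_cases hs1 : s < c - M
  · have hind : (Ico (c - M) (d - M)).indicator (1 : ℝ → ℝ) s = 0 := by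
      apply Set.indicator_of_notMem; rintro ⟨h1, _⟩; linarith
    rw [hind]
    have hev : ∀ᶠ k : ℕ in atTop, (0 : ℝ) =
        (1 / ((k : ℝ) + 1))⁻¹ *
          max (min (d - s) (M + 1 / ((k : ℝ) + 1)) - max (c - s) M) 0 := by
      filter_upwards [hδ0.eventually (gt_mem_nhds (show (0:ℝ) < c - s - M by linarith))]
        with k hk
      have h1 : min (d - s) (M + 1 / ((k : ℝ) + 1)) - max (c - s) M ≤ 0 := by
        have := min_le_right (d - s) (M + 1 / ((k : ℝ) + 1))
        have := le_max_left (c - s) M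
        linarith
      rw [max_eq_right h1, mul_zero]
    exact Filter.Tendsto.congr' hev tendsto_const_nhds
  · by_cases hs2 : d - M ≤ s
    · have hind : (Ico (c - M) (d - M)).indicator (1 : ℝ → ℝ) s = 0 := by
        apply Set.indicator_of_notMem; rintro ⟨_, h2⟩; linarith
      rw [hind]
      have hev : ∀ k : ℕ, (0 : ℝ) =
          (1 / ((k : ℝ) + 1))⁻¹ *
            max (min (d - s) (M + 1 / ((k : ℝ) + 1)) - max (c - s) M) 0 := by
        intro k
        have h1 : min (d - s) (M + 1 / ((k : ℝ) + 1)) - max (c - s) M ≤ 0 := by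
          have := min_le_left (d - s) (M + 1 / ((k : ℝ) + 1))
          have := le_max_right (c - s) M
          linarith
        rw [max_eq_right h1, mul_zero]
      exact Filter.Tendsto.congr' (Filter.Eventually.of_forall hev) tendsto_const_nhds
    · push_neg at hs1 hs2
      have hind : (Ico (c - M) (d - M)).indicator (1 : ℝ → ℝ) s = 1 :=
        Set.indicator_of_mem (Set.mem_Ico.mpr ⟨hs1, hs2⟩) _
      rw [hind]
      have hev : ∀ᶠ k : ℕ in atTop, (1 : ℝ) =
          (1 / ((k : ℝ) + 1))⁻¹ *
            max (min (d - s) (M + 1 / ((k : ℝ) + 1)) - max (c - s) M) 0 := by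
        filter_upwards [hδ0.eventually (gt_mem_nhds (show (0:ℝ) < d - s - M by linarith))]
          with k hk
        have h1 : min (d - s) (M + 1 / ((k : ℝ) + 1)) = M + 1 / ((k : ℝ) + 1) :=
          min_eq_right (by linarith)
        have h2 : max (c - s) M = M := max_eq_right (by linarith)
        rw [h1, h2]
        have h3 : M + 1 / ((k : ℝ) + 1) - M = 1 / ((k : ℝ) + 1) := by ring
        rw [h3, max_eq_left (le_of_lt (hδpos k)), inv_mul_cancel₀ (ne_of_gt (hδpos k))]
      exact Filter.Tendsto.congr' hev tendsto_const_nhds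

lemma cInt_tendsto (ν : ComplexMeasure ℝ) (H : ℕ → ℝ → ℝ) (Hcont : ∀ k, Continuous (H k))
    (Hbd : ∀ k s, |H k s| ≤ 1) (L : ℝ → ℝ)
    (hlim : ∀ s, Filter.Tendsto (fun k => H k s) atTop (𝓝 (L s))) :
    Filter.Tendsto (fun k => cInt ν (fun s => ((H k s : ℝ) : ℂ))) atTop
      (𝓝 (cInt ν (fun s => ((L s : ℝ) : ℂ)))) := by
  have main : ∀ (P : Measure ℝ) [IsFiniteMeasure P],
      Filter.Tendsto (fun k => ∫ s, ((H k s : ℝ) : ℂ) ∂P) atTop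
        (𝓝 (∫ s, ((L s : ℝ) : ℂ) ∂P)) := by
    intro P hP
    apply tendsto_integral_of_dominated_convergence (fun _ => (1 : ℝ))
    · intro k
      exact (Complex.continuous_ofReal.comp (Hcont k)).aestronglyMeasurable
    · exact integrable_const 1
    · intro k
      exact Filter.Eventually.of_forall fun s => by
        rw [Complex.norm_real, Real.norm_eq_abs]; exact Hbd k s
    · exact Filter.Eventually.of_forall fun s =>
        (Complex.continuous_ofReal.continuousAt.tendsto).comp (hlim s)
  unfold cInt
  have i1 := main (ComplexMeasure.re ν).toJordanDecomposition.posPart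
  have i2 := main (ComplexMeasure.re ν).toJordanDecomposition.negPart
  have i3 := main (ComplexMeasure.im ν).toJordanDecomposition.posPart
  have i4 := main (ComplexMeasure.im ν).toJordanDecomposition.negPart
  exact (i1.sub i2).add ((i3.sub i4).const_mul Complex.I)

end Aux3
section Aux4

open MeasureTheory

lemma signed_apply_jordan (r : SignedMeasure ℝ) {E : Set ℝ} (hE : MeasurableSet E) :
    r E = (r.toJordanDecomposition.posPart E).toReal
      - (r.toJordanDecomposition.negPart E).toReal := by
  conv_lhs => rw [← r.toSignedMeasure_toJordanDecomposition]
  rw [JordanDecomposition.toSignedMeasure, VectorMeasure.sub_apply,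
    Measure.toSignedMeasure_apply_measurable hE, Measure.toSignedMeasure_apply_measurable hE,
      measureReal_def, measureReal_def]

lemma sm_zero_of_Ico (r : SignedMeasure ℝ) (N : ℝ)
    (hIco : ∀ a b : ℝ, 0 ≤ a → b ≤ N → r (Ico a b) = 0) :
    ∀ E : Set ℝ, MeasurableSet E → E ⊆ Ico 0 N → r E = 0 := by
  set P := r.toJordanDecomposition.posPart with hP
  set Q := r.toJordanDecomposition.negPart with hQ
  have hPQ : ∀ a b : ℝ, 0 ≤ a → b ≤ N → P (Ico a b) = Q (Ico a b) := by
    intro a b ha hb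
    have h := hIco a b ha hb
    rw [signed_apply_jordan r measurableSet_Ico] at h
    exact (ENNReal.toReal_eq_toReal_iff' (measure_ne_top P _) (measure_ne_top Q _)).mp
      (by linarith)
  have hres : P.restrict (Ico 0 N) = Q.restrict (Ico 0 N) := by
    refine Measure.ext_of_Ico_finite _ _ ?_ ?_
    · rw [Measure.restrict_apply_univ, Measure.restrict_apply_univ]
      exact hPQ 0 N le_rfl le_rfl
    · intro a b _
      rw [Measure.restrict_apply measurableSet_Ico,
        Measure.restrict_apply measurableSet_Ico, Set.Ico_inter_Ico]
      exact hPQ _ _ (le_max_right _ _) (min_le_right _ _)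
  intro E hE hEsub
  have h1 : P E = Q E := by
    have e1 : P E = P.restrict (Ico 0 N) E := by
      rw [Measure.restrict_apply hE, Set.inter_eq_self_of_subset_left hEsub]
    have e2 : Q E = Q.restrict (Ico 0 N) E := by
      rw [Measure.restrict_apply hE, Set.inter_eq_self_of_subset_left hEsub]
    rw [e1, e2, hres]
  rw [signed_apply_jordan r hE, ← hP, ← hQ, h1, sub_self]

lemma cm_zero_of_Ico (ν : ComplexMeasure ℝ) (N : ℝ)
    (hIco : ∀ a b : ℝ, 0 ≤ a → b ≤ N → ν (Ico a b) = 0) :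
    ∀ E : Set ℝ, MeasurableSet E → E ⊆ Ico 0 N → ν E = 0 := by
  have hre : ∀ a b : ℝ, 0 ≤ a → b ≤ N → ComplexMeasure.re ν (Ico a b) = 0 := by
    intro a b ha hb
    have : (ν (Ico a b)).re = ComplexMeasure.re ν (Ico a b) := rfl
    rw [← this, hIco a b ha hb, Complex.zero_re]
  have him : ∀ a b : ℝ, 0 ≤ a → b ≤ N → ComplexMeasure.im ν (Ico a b) = 0 := by
    intro a b ha hb
    have : (ν (Ico a b)).im = ComplexMeasure.im ν (Ico a b) := rfl
    rw [← this, hIco a b ha hb, Complex.zero_im]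
  intro E hE hEsub
  apply Complex.ext
  · show (ν E).re = (0 : ℂ).re
    have : (ν E).re = ComplexMeasure.re ν E := rfl
    rw [this, sm_zero_of_Ico _ N hre E hE hEsub, Complex.zero_re]
  · show (ν E).im = (0 : ℂ).im
    have : (ν E).im = ComplexMeasure.im ν E := rfl
    rw [this, sm_zero_of_Ico _ N him E hE hEsub, Complex.zero_im]

lemma H_cont (c d M : ℝ) (k : ℕ) : Continuous (fun s : ℝ =>
    (1 / ((k : ℝ) + 1))⁻¹ * max (min (d - s) (M + 1 / ((k : ℝ) + 1)) - max (c - s) M) 0) := by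
  apply Continuous.mul continuous_const
  apply Continuous.max _ continuous_const
  exact ((continuous_const.sub continuous_id).min continuous_const).sub
    ((continuous_const.sub continuous_id).max continuous_const)

lemma H_bd (c d M : ℝ) (k : ℕ) (s : ℝ) :
    |(1 / ((k : ℝ) + 1))⁻¹ *
      max (min (d - s) (M + 1 / ((k : ℝ) + 1)) - max (c - s) M) 0| ≤ 1 := by
  set δ : ℝ := 1 / ((k : ℝ) + 1) with hδ
  have hδpos : 0 < δ := by positivity
  have h1 : max (min (d - s) (M + δ) - max (c - s) M) 0 ≤ δ := by
    apply max_le _ hδpos.le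
    have h2 := min_le_right (d - s) (M + δ)
    have h3 := le_max_right (c - s) M
    linarith
  have h0 : (0:ℝ) ≤ max (min (d - s) (M + δ) - max (c - s) M) 0 := le_max_right _ _
  rw [abs_of_nonneg (by positivity)]
  calc δ⁻¹ * max (min (d - s) (M + δ) - max (c - s) M) 0 ≤ δ⁻¹ * δ :=
        mul_le_mul_of_nonneg_left h1 (inv_nonneg.2 hδpos.le)
    _ = 1 := inv_mul_cancel₀ (ne_of_gt hδpos)

end Aux4
/-- There are no nonzero weakly compact multipliers on `L¹_loc(ℝ⁺)`:
if `μ ∈ M_loc` is nonzero (encoded as a compatible family `μ n = μ|_{[0,n)}`), then the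
multiplier `M_μ f = μ * f` (a continuous linear operator `T` on `L¹_loc`, characterized
by testing against bounded functions supported in `[0,n)`) is not weakly compact. -/
theorem no_nonzero_weakly_compact_multipliers (T : L1loc →ₗ[ℂ] L1loc)
    (hT : Continuous T)
    (μ : ℕ → ComplexMeasure ℝ)
    (hconc : ∀ n : ℕ, ConcOn (μ n) (Ico 0 (n : ℝ)))
    (hcompat : ∀ (n : ℕ) (E : Set ℝ), MeasurableSet E → E ⊆ Ico (0 : ℝ) (n : ℝ) →
      μ (n + 1) E = μ n E)
    (hmul : ∀ (F : L1loc) (n : ℕ) (g : ℝ → ℂ), Measurable g →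
      (∃ C : ℝ, ∀ t, ‖g t‖ ≤ C) → (∀ t : ℝ, t ∉ Ico (0 : ℝ) (n : ℝ) → g t = 0) →
      (∫ t, g t * ((T F).1 n : ℝ → ℂ) t ∂(volume.restrict (Ico (0 : ℝ) (n : ℝ)))) =
        cInt (μ n) fun s =>
          ∫ t, g (t + s) * ((F.1 n : ℝ → ℂ) t)
            ∂(volume.restrict (Ico (0 : ℝ) (n : ℝ))))
    (hμ : ∃ n, μ n ≠ 0) :
    ¬ ∃ U ∈ nhds (0 : L1loc), IsCompact (@closure _ L1locWeak (⇑T '' U)) := by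
  rintro ⟨U, hU, hcomp⟩
  -- `U` contains the subspace of `F` vanishing on `[0,M)`.
  have hU' : U ∈ ⨅ n : ℕ,
      @nhds _ (TopologicalSpace.induced (fun F : L1loc => F.1 n) inferInstance) (0 : L1loc) := by
    have e := @nhds_iInf L1loc ℕ
      (fun n => TopologicalSpace.induced (fun F : L1loc => F.1 n) inferInstance) (0 : L1loc)
    rw [← e]; exact hU
  obtain ⟨I, hIfin, V, hV, hUeq⟩ := Filter.mem_iInf.mp hU'
  obtain ⟨M, hM⟩ := hIfin.bddAbove
  have hKU : ∀ F : L1loc, (∀ m : ℕ, m ≤ M → F.1 m = 0) → F ∈ U := by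
    intro F hF
    rw [hUeq]
    refine Set.mem_iInter.mpr fun i => ?_
    obtain ⟨W, hW, hsubW⟩ := (mem_nhds_induced _ _ _).mp (hV i)
    apply hsubW
    have h1 : F.1 (i : ℕ) = (0 : L1loc).1 (i : ℕ) := hF i (hM i.2)
    show F.1 (i : ℕ) ∈ W
    rw [h1]
    exact mem_of_mem_nhds hW
  -- every continuous functional kills `T F` for such `F`
  have key : ∀ F : L1loc, (∀ m : ℕ, m ≤ M → F.1 m = 0) →
      ∀ φ : L1loc →ₗ[ℂ] ℂ, Continuous φ → φ (T F) = 0 := by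
    intro F hF φ hφ
    by_contra hz
    have hC : IsCompact (⇑φ '' (@closure _ L1locWeak (⇑T '' U))) :=
      hcomp.image hφ
    obtain ⟨R, hR⟩ := isBounded_iff_forall_norm_le.mp hC.isBounded
    set z := φ (T F) with hzdef
    have hznorm : 0 < ‖z‖ := norm_pos_iff.mpr hz
    set cc : ℂ := (((max R 0 + 1) / ‖z‖ : ℝ) : ℂ) with hcc
    have hmem : φ (T (cc • F)) ∈ ⇑φ '' (@closure _ L1locWeak (⇑T '' U)) := by
      refine ⟨T (cc • F), ?_, rfl⟩
      have hsc : (⇑T '' U) ⊆ @closure _ L1locWeak (⇑T '' U) := @subset_closure L1loc L1locWeak (⇑T '' U)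
      apply hsc
      refine ⟨cc • F, hKU _ (fun m hm => ?_), rfl⟩
      have h2 : (cc • F).1 m = cc • F.1 m := rfl
      rw [h2, hF m hm, smul_zero]
    have hval : ‖φ (T (cc • F))‖ = max R 0 + 1 := by
      rw [T.map_smul, φ.map_smul, ← hzdef, smul_eq_mul, norm_mul, hcc, Complex.norm_real,
        Real.norm_eq_abs, abs_of_nonneg (by positivity), div_mul_cancel₀ _ (ne_of_gt hznorm)]
    have hle := hR _ hmem
    rw [hval] at hle
    have := le_max_left R 0
    linarith
  -- the nonzero level and the working level
  obtain ⟨N₀, hN₀⟩ := hμ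
  set n' : ℕ := N₀ + (M + 1) with hn'
  have hMn' : (M : ℝ) + 1 ≤ (n' : ℝ) := by
    rw [hn']; push_cast; linarith [Nat.cast_nonneg (α := ℝ) N₀]
  have hMnn : (0:ℝ) ≤ (M:ℝ) := Nat.cast_nonneg M
  -- all intervals `[a,b) ⊆ [0,N₀)` are `μ n'`-null
  have hIco : ∀ a b : ℝ, 0 ≤ a → b ≤ (N₀ : ℝ) → μ n' (Ico a b) = 0 := by
    intro a b ha hb
    set c : ℝ := a + M with hcdef
    set d : ℝ := b + M with hddef
    have hzero : ∀ k : ℕ,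
        cInt (μ n') (fun s => (((1 / ((k : ℝ) + 1))⁻¹ *
          max (min (d - s) ((M:ℝ) + 1 / ((k : ℝ) + 1)) - max (c - s) (M:ℝ)) 0 : ℝ) : ℂ)) = 0 := by
      intro k
      set δ : ℝ := 1 / ((k : ℝ) + 1) with hδdef
      have hδpos : 0 < δ := by positivity
      have hδ1 : δ ≤ 1 := by
        rw [hδdef, div_le_one (by positivity)]; linarith [Nat.cast_nonneg (α := ℝ) k]
      have hgmeas : Measurable ((Ico c d).indicator (fun _ => (1:ℂ))) :=
        measurable_const.indicator measurableSet_Ico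
      have hgbd : ∀ t, ‖(Ico c d).indicator (fun _ => (1:ℂ)) t‖ ≤ 1 := by
        intro t
        by_cases h : t ∈ Ico c d <;> simp [Set.indicator_apply, h]
      have hgsupp : ∀ t : ℝ, t ∉ Ico (0:ℝ) (n' : ℝ) →
          (Ico c d).indicator (fun _ => (1:ℂ)) t = 0 := by
        intro t ht
        apply Set.indicator_of_notMem
        intro htm
        apply ht
        constructor
        · linarith [htm.1, hcdef ▸ (by linarith : (0:ℝ) ≤ c)]
        · have : d ≤ (n' : ℝ) := by rw [hddef, hn']; push_cast; linarith
          linarith [htm.2]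
      set F₀ : L1loc := indL1 (δ⁻¹ : ℂ) (M : ℝ) ((M : ℝ) + δ) with hF₀
      have hF₀z : ∀ m : ℕ, m ≤ M → F₀.1 m = 0 := by
        intro m hm
        exact indL1_eq_zero _ _ _ m (by exact_mod_cast hm)
      have hkey := key F₀ hF₀z (testFun n' _ hgmeas 1 hgbd) (testFun_cont n' _ hgmeas 1 hgbd)
      have hkey' : (∫ t, (Ico c d).indicator (fun _ => (1:ℂ)) t *
          ((T F₀).1 n' : ℝ → ℂ) t ∂(volume.restrict (Ico (0 : ℝ) (n' : ℝ)))) = 0 := hkey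
      have hmul' := hmul F₀ n' _ hgmeas ⟨1, hgbd⟩ hgsupp
      rw [hkey'] at hmul'
      have hfun : (fun s => ∫ t, (Ico c d).indicator (fun _ => (1:ℂ)) (t + s) *
            ((F₀.1 n' : ℝ → ℂ) t) ∂(volume.restrict (Ico (0 : ℝ) (n' : ℝ))))
          = fun s => ((δ⁻¹ * max (min (d - s) ((M:ℝ) + δ) - max (c - s) (M:ℝ)) 0 : ℝ) : ℂ) := by
        funext s
        exact integral_test n' c d (M:ℝ) δ hMnn (by linarith) s
      rw [hfun] at hmul'
      exact hmul'.symm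
    -- dominated convergence
    have hlim := cInt_tendsto (μ n')
      (fun k s => (1 / ((k : ℝ) + 1))⁻¹ *
        max (min (d - s) ((M:ℝ) + 1 / ((k : ℝ) + 1)) - max (c - s) (M:ℝ)) 0)
      (fun k => H_cont c d (M:ℝ) k) (fun k s => H_bd c d (M:ℝ) k s)
      (fun s => (Ico (c - (M:ℝ)) (d - (M:ℝ))).indicator (1 : ℝ → ℝ) s)
      (fun s => H_tendsto c d (M:ℝ) s)
    have hconst : Filter.Tendsto (fun k : ℕ =>
        cInt (μ n') (fun s => (((1 / ((k : ℝ) + 1))⁻¹ *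
          max (min (d - s) ((M:ℝ) + 1 / ((k : ℝ) + 1)) - max (c - s) (M:ℝ)) 0 : ℝ) : ℂ)))
        atTop (𝓝 0) := by
      rw [show (fun k : ℕ => cInt (μ n') (fun s => (((1 / ((k : ℝ) + 1))⁻¹ *
          max (min (d - s) ((M:ℝ) + 1 / ((k : ℝ) + 1)) - max (c - s) (M:ℝ)) 0 : ℝ) : ℂ)))
        = fun _ : ℕ => (0 : ℂ) from funext hzero]
      exact tendsto_const_nhds
    have h0 : cInt (μ n')
        (fun s => (((Ico (c - (M:ℝ)) (d - (M:ℝ))).indicator (1 : ℝ → ℝ) s : ℝ) : ℂ)) = 0 :=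
      tendsto_nhds_unique hlim hconst
    rw [cInt_indicator_eq _ measurableSet_Ico] at h0
    have : Ico (c - (M:ℝ)) (d - (M:ℝ)) = Ico a b := by
      rw [hcdef, hddef]; congr 1 <;> ring
    rwa [this] at h0
  -- conclude `μ N₀ = 0`
  apply hN₀
  apply VectorMeasure.ext
  intro E hE
  have hsplit : μ N₀ E = μ N₀ (E ∩ Ico 0 (N₀:ℝ)) + μ N₀ (E \ Ico 0 (N₀:ℝ)) := by
    rw [← VectorMeasure.of_union
      (Set.disjoint_left.mpr fun x hx hx2 => hx2.2 hx.2)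
      (hE.inter measurableSet_Ico) (hE.diff measurableSet_Ico), Set.inter_union_diff]
  have hdiff : μ N₀ (E \ Ico 0 (N₀:ℝ)) = 0 :=
    hconc N₀ _ (hE.diff measurableSet_Ico) (fun x hx => hx.2)
  have hchain : ∀ j : ℕ, ∀ E : Set ℝ, MeasurableSet E → E ⊆ Ico (0:ℝ) (N₀:ℝ) →
      μ (N₀ + j) E = μ N₀ E := by
    intro j
    induction j with
    | zero => intro E _ _; rfl
    | succ j ih =>
      intro E hE hsub
      have hstep := hcompat (N₀ + j) E hE
        (hsub.trans (Ico_subset_Ico_right (by exact_mod_cast Nat.le_add_right N₀ j)))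
      rw [show N₀ + (j + 1) = (N₀ + j) + 1 from rfl, hstep, ih E hE hsub]
  have hinter : μ N₀ (E ∩ Ico 0 (N₀:ℝ)) = 0 := by
    rw [← hchain (M + 1) _ (hE.inter measurableSet_Ico) Set.inter_subset_right, ← hn']
    exact cm_zero_of_Ico (μ n') (N₀:ℝ) hIco _ (hE.inter measurableSet_Ico)
      Set.inter_subset_right
  rw [hsplit, hdiff, hinter, add_zero]
  rfl
end
end

section
/- Let (ω_n) be an increasing sequence of algebra weights on ℝ⁺ satisfying: for every n there exists m with sup_{t∈ℝ⁺} t ω_n(t)/ω_m(t) < ∞. Let μ ∈ B(ω) and h ∈ C₀(1/ω_n) for some n. Then the function (T_μ h)(t) = t ∫_{ℝ⁺} h(t+s) dμ(s) is continuous on ℝ⁺ and belongs to C₀(1/ω_m) for suitable m; explicitly, if |h(t)| ≤ ε(t) ω_n(t) with ε decreasing to 0 and t ω_n(t) ≤ C ω_m(t), then |(T_μ h)(t)| ≤ C ε(t) ω_m(t) ‖μ‖_{ω_n}. -/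
open MeasureTheory Set Filter Topology

noncomputable section

/-- `ω` is an algebra weight on `ℝ⁺`: positive, Borel, with `ω` and `1/ω` locally
bounded, right continuous, submultiplicative and `ω 0 = 1`. -/
def IsAlgebraWeight (ω : ℝ → ℝ) : Prop :=
  Measurable ω ∧ (∀ t ∈ Ici (0 : ℝ), 0 < ω t) ∧
    (∀ T : ℝ, ∃ C : ℝ, ∀ t ∈ Icc (0 : ℝ) T, ω t ≤ C ∧ 1 / ω t ≤ C) ∧
    (∀ t ∈ Ici (0 : ℝ), ContinuousWithinAt ω (Ici t) t) ∧
    (∀ s ∈ Ici (0 : ℝ), ∀ t ∈ Ici (0 : ℝ), ω (s + t) ≤ ω s * ω t) ∧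
    ω 0 = 1

/-- `(ω n)` is an increasing sequence of algebra weights on `ℝ⁺`. -/
def IsWeightSeq (ω : ℕ → ℝ → ℝ) : Prop :=
  (∀ n, IsAlgebraWeight (ω n)) ∧ ∀ n, ∀ t ∈ Ici (0 : ℝ), ω n t ≤ ω (n + 1) t

/-- `σ` encodes an element `μ ∈ B(ω) = ⋂ₙ M(ωₙ)`: the `n`-th component is the finite
complex measure `ωₙ · μ`, so that `∫ f dμ = ∫ f/ωₙ d(σ n)`; the components are linked by
`σ n = (ωₙ/ω_{n+1}) · σ (n+1)` (tested against bounded measurable functions), and each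
is concentrated on `ℝ⁺`. In particular `‖μ‖_{ωₙ} = ‖σ n‖ = |σ n|(ℝ⁺)`. -/
def MemBW (ω : ℕ → ℝ → ℝ) (σ : ℕ → ComplexMeasure ℝ) : Prop :=
  (∀ n, ConcOn (σ n) (Ici 0)) ∧
    ∀ (n : ℕ) (f : ℝ → ℂ), Measurable f → (∃ C : ℝ, ∀ t, ‖f t‖ ≤ C) →
      cInt (σ n) f = cInt (σ (n + 1)) fun t => ((ω n t / ω (n + 1) t : ℝ) : ℂ) * f t

lemma tv_null {α : Type*} [MeasurableSpace α] (s : SignedMeasure α) {B : Set α}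
    (hB : MeasurableSet B) (h : ∀ E : Set α, MeasurableSet E → E ⊆ B → s E = 0) :
    s.totalVariation B = 0 := by
  obtain ⟨i, hi₁, hi₂, hi₃, hpos, hneg⟩ := s.toJordanDecomposition_spec
  rw [SignedMeasure.totalVariation, Measure.add_apply, hpos, hneg,
    SignedMeasure.toMeasureOfZeroLE_apply _ hi₂ hi₁ hB,
    SignedMeasure.toMeasureOfLEZero_apply _ hi₃ hi₁.compl hB]
  simp [h (i ∩ B) (hi₁.inter hB) Set.inter_subset_right,
    h (iᶜ ∩ B) (hi₁.compl.inter hB) Set.inter_subset_right]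

lemma ae_mem_Ici {κ : Measure ℝ} (hκ : κ (Ici (0:ℝ))ᶜ = 0) : ∀ᵐ s ∂κ, s ∈ Ici (0:ℝ) := by
  rw [ae_iff]
  exact measure_mono_null (fun x hx => hx) hκ

lemma cInt_norm_le (ν : ComplexMeasure ℝ) (f : ℝ → ℂ) {B : ℝ}
    (h1 : ∀ᵐ s ∂ν.re.toJordanDecomposition.posPart, ‖f s‖ ≤ B)
    (h2 : ∀ᵐ s ∂ν.re.toJordanDecomposition.negPart, ‖f s‖ ≤ B)
    (h3 : ∀ᵐ s ∂ν.im.toJordanDecomposition.posPart, ‖f s‖ ≤ B)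
    (h4 : ∀ᵐ s ∂ν.im.toJordanDecomposition.negPart, ‖f s‖ ≤ B) :
    ‖cInt ν f‖ ≤ B * (cTV ν univ).toReal := by
  set μ1 := ν.re.toJordanDecomposition.posPart
  set μ2 := ν.re.toJordanDecomposition.negPart
  set μ3 := ν.im.toJordanDecomposition.posPart
  set μ4 := ν.im.toJordanDecomposition.negPart
  have e1 := norm_integral_le_of_norm_le_const h1
  have e2 := norm_integral_le_of_norm_le_const h2
  have e3 := norm_integral_le_of_norm_le_const h3
  have e4 := norm_integral_le_of_norm_le_const h4
  have hTVsum : cTV ν univ = μ1 univ + μ2 univ + (μ3 univ + μ4 univ) := by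
    simp [cTV, SignedMeasure.totalVariation, μ1, μ2, μ3, μ4]
  have hTV : (cTV ν univ).toReal =
      (μ1 univ).toReal + (μ2 univ).toReal + ((μ3 univ).toReal + (μ4 univ).toReal) := by
    rw [hTVsum, ENNReal.toReal_add (ENNReal.add_ne_top.2 ⟨measure_ne_top _ _, measure_ne_top _ _⟩)
        (ENNReal.add_ne_top.2 ⟨measure_ne_top _ _, measure_ne_top _ _⟩),
      ENNReal.toReal_add (measure_ne_top _ _) (measure_ne_top _ _),
      ENNReal.toReal_add (measure_ne_top _ _) (measure_ne_top _ _)]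
  calc ‖cInt ν f‖ ≤ ‖(∫ x, f x ∂μ1) - ∫ x, f x ∂μ2‖ +
        ‖Complex.I * ((∫ x, f x ∂μ3) - ∫ x, f x ∂μ4)‖ := norm_add_le _ _
    _ ≤ (‖∫ x, f x ∂μ1‖ + ‖∫ x, f x ∂μ2‖) + (‖∫ x, f x ∂μ3‖ + ‖∫ x, f x ∂μ4‖) := by
        rw [norm_mul, Complex.norm_I, one_mul]
        exact add_le_add (norm_sub_le _ _) (norm_sub_le _ _)
    _ ≤ (B * (μ1 univ).toReal + B * (μ2 univ).toReal) +
        (B * (μ3 univ).toReal + B * (μ4 univ).toReal) :=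
        add_le_add (add_le_add e1 e2) (add_le_add e3 e4)
    _ = B * (cTV ν univ).toReal := by rw [hTV]; ring

lemma cInt_congr (ν : ComplexMeasure ℝ) (f g : ℝ → ℂ)
    (h1 : f =ᵐ[ν.re.toJordanDecomposition.posPart] g)
    (h2 : f =ᵐ[ν.re.toJordanDecomposition.negPart] g)
    (h3 : f =ᵐ[ν.im.toJordanDecomposition.posPart] g)
    (h4 : f =ᵐ[ν.im.toJordanDecomposition.negPart] g) :
    cInt ν f = cInt ν g := by
  unfold cInt
  rw [integral_congr_ae h1, integral_congr_ae h2, integral_congr_ae h3, integral_congr_ae h4]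

lemma int_contOn (κ : Measure ℝ) [IsFiniteMeasure κ] (hκ : ∀ᵐ s ∂κ, s ∈ Ici (0:ℝ))
    (w : ℝ → ℝ) (hw : Measurable w) (hwpos : ∀ t ∈ Ici (0:ℝ), 0 < w t)
    (hwloc : ∀ T : ℝ, ∃ C : ℝ, ∀ t ∈ Icc (0:ℝ) T, w t ≤ C ∧ 1 / w t ≤ C)
    (hwsub : ∀ s ∈ Ici (0:ℝ), ∀ t ∈ Ici (0:ℝ), w (s + t) ≤ w s * w t)
    (H : ℝ → ℂ) (hH : Continuous H)
    (ε : ℝ → ℝ) (hε_anti : AntitoneOn ε (Ici 0)) (hε_nonneg : ∀ t ∈ Ici (0:ℝ), 0 ≤ ε t)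
    (hHb : ∀ x ∈ Ici (0:ℝ), ‖H x‖ ≤ ε x * w x) :
    ContinuousOn (fun t => ∫ s, H (t + s) / ((w s : ℝ) : ℂ) ∂κ) (Ici 0) := by
  intro t₀ ht₀
  obtain ⟨M, hM⟩ := hwloc (t₀ + 1)
  apply continuousWithinAt_of_dominated (bound := fun _ => ε 0 * M)
  · exact Filter.Eventually.of_forall fun t =>
      ((hH.comp (continuous_const.add continuous_id)).measurable.div
        (Complex.measurable_ofReal.comp hw)).aestronglyMeasurable
  · have hmem : ∀ᶠ t in 𝓝[Ici (0:ℝ)] t₀, t ∈ Ici (0:ℝ) := self_mem_nhdsWithin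
    have hlt : ∀ᶠ t in 𝓝[Ici (0:ℝ)] t₀, t < t₀ + 1 :=
      mem_nhdsWithin_of_mem_nhds (Iio_mem_nhds (lt_add_one t₀))
    filter_upwards [hmem, hlt] with t ht htlt
    filter_upwards [hκ] with s hs
    have hts : t + s ∈ Ici (0:ℝ) := mem_Ici.2 (add_nonneg (mem_Ici.1 ht) (mem_Ici.1 hs))
    have hws := hwpos s hs
    have hnorm : ‖H (t + s) / ((w s : ℝ) : ℂ)‖ = ‖H (t + s)‖ / w s := by
      rw [norm_div, Complex.norm_real, Real.norm_of_nonneg hws.le]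
    rw [hnorm, div_le_iff₀ hws]
    have hε0' := hε_nonneg 0 self_mem_Ici
    calc ‖H (t + s)‖ ≤ ε (t + s) * w (t + s) := hHb _ hts
      _ ≤ ε 0 * (w t * w s) :=
          mul_le_mul (hε_anti self_mem_Ici hts (mem_Ici.1 hts)) (hwsub t ht s hs) (hwpos _ hts).le hε0'
      _ ≤ ε 0 * M * w s := by
          rw [mul_assoc]
          refine mul_le_mul_of_nonneg_left ?_ hε0'
          exact mul_le_mul_of_nonneg_right ((hM t ⟨ht, htlt.le⟩).1) hws.le
  · exact integrable_const _
  · exact Filter.Eventually.of_forall fun s =>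
      ((hH.comp (continuous_id.add continuous_const)).div_const _).continuousWithinAt

/-- Let `(ωₙ)` be an increasing sequence of algebra weights on `ℝ⁺`
with: for every `n` there is `m` with `sup_t t ωₙ(t)/ω_m(t) < ∞`. Let `μ ∈ B(ω)`
(encoded by `σ`) and `h ∈ C₀(1/ωₙ)`, say `‖h t‖ ≤ ε t · ωₙ t` with `ε` decreasing to `0`,
and let `t ωₙ(t) ≤ C ω_m(t)` on `ℝ⁺`. Then `(T_μ h)(t) = t ∫ h(t+s) dμ(s)` is continuous
on `ℝ⁺` and satisfies `‖(T_μ h)(t)‖ ≤ C ε(t) ω_m(t) ‖μ‖_{ωₙ}`; in particular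
`T_μ h ∈ C₀(1/ω_m)`. -/
theorem Tmu_maps_C0w_into_C0w (ω : ℕ → ℝ → ℝ) (hω : IsWeightSeq ω)
    (hwc : ∀ n : ℕ, ∃ (m : ℕ) (C : ℝ), ∀ t ∈ Ici (0 : ℝ), t * ω n t ≤ C * ω m t)
    (σ : ℕ → ComplexMeasure ℝ) (hσ : MemBW ω σ)
    (h : ℝ → ℂ) (n : ℕ) (hh : ContinuousOn h (Ici 0))
    (ε : ℝ → ℝ) (hε_anti : AntitoneOn ε (Ici 0)) (hε0 : Tendsto ε atTop (nhds 0))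
    (hhε : ∀ t ∈ Ici (0 : ℝ), ‖h t‖ ≤ ε t * ω n t)
    (m : ℕ) (C : ℝ) (hC : ∀ t ∈ Ici (0 : ℝ), t * ω n t ≤ C * ω m t) :
    ContinuousOn
        (fun t : ℝ => (t : ℂ) * cInt (σ n) fun s => h (t + s) / ((ω n s : ℝ) : ℂ))
        (Ici 0) ∧
      (∀ t ∈ Ici (0 : ℝ),
        ‖(t : ℂ) * cInt (σ n) fun s => h (t + s) / ((ω n s : ℝ) : ℂ)‖ ≤
          C * ε t * ω m t * (cTV (σ n) univ).toReal) ∧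
      Tendsto
        (fun t : ℝ =>
          ‖(t : ℂ) * cInt (σ n) fun s => h (t + s) / ((ω n s : ℝ) : ℂ)‖ / ω m t)
        atTop (nhds 0) := by
  obtain ⟨hwmeas, hwpos, hwloc, -, hwsub, hw0⟩ := hω.1 n
  obtain ⟨-, hmpos, -, -, -, -⟩ := hω.1 m
  have conc := hσ.1 n
  -- the four Jordan pieces are concentrated on `Ici 0`
  have hre0 : (σ n).re.totalVariation (Ici (0:ℝ))ᶜ = 0 := by
    refine tv_null _ measurableSet_Ici.compl fun E hE hEB => ?_
    simp [ComplexMeasure.re_apply]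
    exact (VectorMeasure.mapRange_apply _ _).trans (by simp [conc E hE hEB])
  have him0 : (σ n).im.totalVariation (Ici (0:ℝ))ᶜ = 0 := by
    refine tv_null _ measurableSet_Ici.compl fun E hE hEB => ?_
    simp [ComplexMeasure.im_apply]
    exact (VectorMeasure.mapRange_apply _ _).trans (by simp [conc E hE hEB])
  rw [SignedMeasure.totalVariation, Measure.add_apply, add_eq_zero] at hre0 him0
  have hae1 : ∀ᵐ s ∂(σ n).re.toJordanDecomposition.posPart, s ∈ Ici (0:ℝ) := ae_mem_Ici hre0.1
  have hae2 : ∀ᵐ s ∂(σ n).re.toJordanDecomposition.negPart, s ∈ Ici (0:ℝ) := ae_mem_Ici hre0.2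
  have hae3 : ∀ᵐ s ∂(σ n).im.toJordanDecomposition.posPart, s ∈ Ici (0:ℝ) := ae_mem_Ici him0.1
  have hae4 : ∀ᵐ s ∂(σ n).im.toJordanDecomposition.negPart, s ∈ Ici (0:ℝ) := ae_mem_Ici him0.2
  -- `ε` is nonnegative on `Ici 0`
  have hε_nonneg : ∀ t ∈ Ici (0:ℝ), 0 ≤ ε t := by
    intro t ht
    refine le_of_tendsto hε0 ?_
    filter_upwards [eventually_ge_atTop t] with u hu
    exact hε_anti ht (le_trans ht hu) hu
  set S : ℝ := (cTV (σ n) univ).toReal with hSdef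
  have hS : 0 ≤ S := ENNReal.toReal_nonneg
  -- the key norm estimate
  have part2 : ∀ t ∈ Ici (0:ℝ),
      ‖(t : ℂ) * cInt (σ n) fun s => h (t + s) / ((ω n s : ℝ) : ℂ)‖ ≤
        C * ε t * ω m t * S := by
    intro t ht
    have hball : ∀ s ∈ Ici (0:ℝ), ‖h (t + s) / ((ω n s : ℝ) : ℂ)‖ ≤ ε t * ω n t := by
      intro s hs
      have hws := hwpos s hs
      have hts : t + s ∈ Ici (0:ℝ) := mem_Ici.2 (add_nonneg (mem_Ici.1 ht) (mem_Ici.1 hs))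
      rw [norm_div, Complex.norm_real, Real.norm_of_nonneg hws.le, div_le_iff₀ hws]
      calc ‖h (t + s)‖ ≤ ε (t + s) * ω n (t + s) := hhε _ hts
        _ ≤ ε t * (ω n t * ω n s) :=
            mul_le_mul (hε_anti ht hts (le_add_of_nonneg_right (mem_Ici.1 hs))) (hwsub t ht s hs)
              (hwpos _ hts).le (hε_nonneg t ht)
        _ = ε t * ω n t * ω n s := (mul_assoc _ _ _).symm
    have hbound := cInt_norm_le (σ n) (fun s => h (t + s) / ((ω n s : ℝ) : ℂ))
      (hae1.mono fun s hs => hball s hs) (hae2.mono fun s hs => hball s hs)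
      (hae3.mono fun s hs => hball s hs) (hae4.mono fun s hs => hball s hs)
    rw [norm_mul, Complex.norm_real, Real.norm_of_nonneg ht]
    calc t * ‖cInt (σ n) fun s => h (t + s) / ((ω n s : ℝ) : ℂ)‖ ≤ t * (ε t * ω n t * S) := by
          exact mul_le_mul_of_nonneg_left hbound ht
      _ = (t * ω n t) * (ε t * S) := by ring
      _ ≤ (C * ω m t) * (ε t * S) :=
          mul_le_mul_of_nonneg_right (hC t ht) (mul_nonneg (hε_nonneg t ht) hS)
      _ = C * ε t * ω m t * S := by ring
  refine ⟨?_, part2, ?_⟩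
  · -- continuity
    set H : ℝ → ℂ := fun x => h (max x 0) with hHdef
    have hHcont : Continuous H :=
      hh.comp_continuous (continuous_id.max continuous_const) fun x => le_max_right x 0
    have hHb : ∀ x ∈ Ici (0:ℝ), ‖H x‖ ≤ ε x * ω n x := by
      intro x hx
      rw [hHdef]
      simpa [max_eq_left (mem_Ici.1 hx)] using hhε x hx
    have cInt_cont : ContinuousOn
        (fun t => cInt (σ n) fun s => H (t + s) / ((ω n s : ℝ) : ℂ)) (Ici 0) := by
      have c1 := int_contOn _ hae1 (ω n) hwmeas hwpos hwloc hwsub H hHcont ε hε_anti hε_nonneg hHb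
      have c2 := int_contOn _ hae2 (ω n) hwmeas hwpos hwloc hwsub H hHcont ε hε_anti hε_nonneg hHb
      have c3 := int_contOn _ hae3 (ω n) hwmeas hwpos hwloc hwsub H hHcont ε hε_anti hε_nonneg hHb
      have c4 := int_contOn _ hae4 (ω n) hwmeas hwpos hwloc hwsub H hHcont ε hε_anti hε_nonneg hHb
      exact ((c1.sub c2).add (continuousOn_const.mul (c3.sub c4)))
    have main_cont : ContinuousOn
        (fun t : ℝ => (t : ℂ) * cInt (σ n) fun s => H (t + s) / ((ω n s : ℝ) : ℂ)) (Ici 0) :=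
      Complex.continuous_ofReal.continuousOn.mul cInt_cont
    refine main_cont.congr fun t ht => ?_
    have heq : ∀ s ∈ Ici (0:ℝ),
        h (t + s) / ((ω n s : ℝ) : ℂ) = H (t + s) / ((ω n s : ℝ) : ℂ) := by
      intro s hs
      rw [hHdef]
      simp [max_eq_left (add_nonneg (mem_Ici.1 ht) (mem_Ici.1 hs))]
    congr 1
    exact cInt_congr (σ n) _ _ (hae1.mono fun s hs => heq s hs) (hae2.mono fun s hs => heq s hs)
      (hae3.mono fun s hs => heq s hs) (hae4.mono fun s hs => heq s hs)
  · -- decay at infinity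
    have hg : Tendsto (fun t => C * S * ε t) atTop (nhds 0) := by
      simpa using hε0.const_mul (C * S)
    apply squeeze_zero' ?_ ?_ hg
    · filter_upwards [eventually_ge_atTop (0:ℝ)] with t ht
      exact div_nonneg (norm_nonneg _) (hmpos t ht).le
    · filter_upwards [eventually_ge_atTop (0:ℝ)] with t ht
      rw [div_le_iff₀ (hmpos t ht)]
      calc ‖(t : ℂ) * cInt (σ n) fun s => h (t + s) / ((ω n s : ℝ) : ℂ)‖
          ≤ C * ε t * ω m t * S := part2 t ht
        _ = C * S * ε t * ω m t := by ring
end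
end

section
/- Let (ω_n) be an increasing sequence of algebra weights on ℝ⁺ satisfying the condition that for every n there is m with sup_t t ω_n(t)/ω_m(t) < ∞, and let μ ∈ B(ω). Then the derivation D̄_μ ν = (Xν)*μ on B(ω) equals the adjoint of the continuous operator T_μ on D(1/ω) = ⋃_n C₀(1/ω_n) defined by (T_μ h)(t) = t ∫_{ℝ⁺} h(t+s) dμ(s); that is, ∫ h d((Xν)*μ) = ∫ (T_μ h) dν for all h ∈ D(1/ω) and ν ∈ B(ω), so D̄_μ is weak-star continuous on B(ω) = D(1/ω)*. -/
open MeasureTheory Set Filter Topology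

noncomputable section

/-- `h ∈ C₀(1/ω_k)`: `h` is continuous on `ℝ⁺` and `h/ω_k` is bounded and vanishes
at infinity. -/
def MemC0w (ω : ℕ → ℝ → ℝ) (k : ℕ) (h : ℝ → ℂ) : Prop :=
  ContinuousOn h (Ici 0) ∧ (∃ D : ℝ, ∀ t ∈ Ici (0 : ℝ), ‖h t‖ ≤ D * ω k t) ∧
    Tendsto (fun t => ‖h t‖ / ω k t) atTop (nhds 0)

/-- `ρ` represents the measure `(Xν) * μ` (with `μ, ν ∈ B(ω)` encoded by `σ, τ`):
for any `n`, any `m, C` with `t ωₙ(t) ≤ C ω_m(t)` on `ℝ⁺`, and any bounded Borel set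
`E`, `(ωₙ · ρ)(E) = ∫∫ 1_E(t+s) ωₙ(t+s) t dμ(s) dν(t)`. -/
def IsXConvBW (ω : ℕ → ℝ → ℝ) (σ τ σρ : ℕ → ComplexMeasure ℝ) : Prop :=
  ∀ (n m : ℕ) (C : ℝ), (∀ t ∈ Ici (0 : ℝ), t * ω n t ≤ C * ω m t) →
    ∀ E : Set ℝ, MeasurableSet E → Bornology.IsBounded E →
      σρ n E = cInt (τ m) fun t => ((t / ω m t : ℝ) : ℂ) *
        cInt (σ n) fun s =>
          E.indicator (fun u => ((ω n u : ℝ) : ℂ)) (t + s) / ((ω n s : ℝ) : ℂ)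

def jparts (μ : ComplexMeasure ℝ) : Fin 4 → Measure ℝ :=
  ![μ.re.toJordanDecomposition.posPart, μ.re.toJordanDecomposition.negPart,
    μ.im.toJordanDecomposition.posPart, μ.im.toJordanDecomposition.negPart]

def jcoef : Fin 4 → ℂ := ![1, -1, Complex.I, -Complex.I]

instance jparts_finite (μ : ComplexMeasure ℝ) (j : Fin 4) : IsFiniteMeasure (jparts μ j) := by
  fin_cases j <;> simp [jparts] <;> infer_instance

lemma cInt_eq_sum (μ : ComplexMeasure ℝ) (f : ℝ → ℂ) :
    cInt μ f = ∑ j, jcoef j * ∫ x, f x ∂ jparts μ j := by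
  simp [cInt, jparts, jcoef, Fin.sum_univ_four]; ring

def jmass (μ : ComplexMeasure ℝ) : ℝ := ∑ j, (jparts μ j Set.univ).toReal

lemma jmass_nonneg (μ : ComplexMeasure ℝ) : 0 ≤ jmass μ :=
  Finset.sum_nonneg fun _ _ => ENNReal.toReal_nonneg

lemma jordan_null (s : SignedMeasure ℝ)
    (h : ∀ E : Set ℝ, MeasurableSet E → E ⊆ Iio 0 → s E = 0) :
    s.toJordanDecomposition.posPart (Iio 0) = 0 ∧
      s.toJordanDecomposition.negPart (Iio 0) = 0 := by
  obtain ⟨i, hi₁, hi₂, hi₃, hpos, hneg⟩ := s.toJordanDecomposition_spec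
  constructor
  · rw [hpos, SignedMeasure.toMeasureOfZeroLE_apply _ hi₂ hi₁ measurableSet_Iio]
    simp [h _ (hi₁.inter measurableSet_Iio) inter_subset_right]
  · rw [hneg, SignedMeasure.toMeasureOfLEZero_apply _ hi₃ hi₁.compl measurableSet_Iio]
    simp [h _ (hi₁.compl.inter measurableSet_Iio) inter_subset_right]

lemma jparts_null {μ : ComplexMeasure ℝ} (hc : ConcOn μ (Ici 0)) (j : Fin 4) :
    jparts μ j (Iio 0) = 0 := by
  have hre : ∀ E : Set ℝ, MeasurableSet E → E ⊆ Iio 0 → μ.re E = 0 := by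
    intro E hE hE'
    have : μ E = 0 := hc E hE (by rwa [compl_Ici])
    show (μ E).re = 0
    rw [this]; simp
  have him : ∀ E : Set ℝ, MeasurableSet E → E ⊆ Iio 0 → μ.im E = 0 := by
    intro E hE hE'
    have : μ E = 0 := hc E hE (by rwa [compl_Ici])
    show (μ E).im = 0
    rw [this]; simp
  fin_cases j <;> simp [jparts] <;>
    first
      | exact (jordan_null _ hre).1 | exact (jordan_null _ hre).2
      | exact (jordan_null _ him).1 | exact (jordan_null _ him).2

lemma cInt_congr_s17 {μ : ComplexMeasure ℝ} (hc : ConcOn μ (Ici 0)) {f g : ℝ → ℂ}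
    (hfg : ∀ x ∈ Ici (0:ℝ), f x = g x) : cInt μ f = cInt μ g := by
  rw [cInt_eq_sum, cInt_eq_sum]
  refine Finset.sum_congr rfl fun j _ => ?_
  congr 1
  refine integral_congr_ae ?_
  have : jparts μ j {x | ¬ f x = g x} = 0 := by
    refine measure_mono_null (fun x hx => ?_) (jparts_null hc j)
    by_contra hx'
    exact hx (hfg x (Set.mem_Ici.2 (le_of_not_gt hx')))
  exact this

lemma cInt_norm_le_s17 (μ : ComplexMeasure ℝ) (f : ℝ → ℂ) {B : ℝ}
    (hB : ∀ x, ‖f x‖ ≤ B) : ‖cInt μ f‖ ≤ B * jmass μ := by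
  rw [cInt_eq_sum, jmass, Finset.mul_sum]
  refine (norm_sum_le _ _).trans (Finset.sum_le_sum fun j _ => ?_)
  rw [norm_mul]
  have h1 : ‖jcoef j‖ = 1 := by fin_cases j <;> simp [jcoef]
  rw [h1, one_mul]
  exact norm_integral_le_of_norm_le_const (Eventually.of_forall hB)

lemma integrable_of_bound (μ : ComplexMeasure ℝ) (j : Fin 4) {f : ℝ → ℂ} {B : ℝ}
    (hf : Measurable f) (hB : ∀ x, ‖f x‖ ≤ B) : Integrable f (jparts μ j) :=
  (integrable_const B).mono' hf.aestronglyMeasurable (Eventually.of_forall hB)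

lemma cInt_sub (μ : ComplexMeasure ℝ) {f g : ℝ → ℂ}
    (hf : ∀ j, Integrable f (jparts μ j)) (hg : ∀ j, Integrable g (jparts μ j)) :
    cInt μ (fun x => f x - g x) = cInt μ f - cInt μ g := by
  simp only [cInt_eq_sum, ← Finset.sum_sub_distrib]
  refine Finset.sum_congr rfl fun j _ => ?_
  rw [integral_sub (hf j) (hg j)]; ring

lemma cInt_finset_sum {ι : Type*} (μ : ComplexMeasure ℝ) (S : Finset ι) (F : ι → ℝ → ℂ)
    (hF : ∀ i ∈ S, ∀ j, Integrable (F i) (jparts μ j)) :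
    cInt μ (fun x => ∑ i ∈ S, F i x) = ∑ i ∈ S, cInt μ (F i) := by
  simp only [cInt_eq_sum]
  rw [Finset.sum_comm]
  refine Finset.sum_congr rfl fun j _ => ?_
  rw [integral_finset_sum _ (fun i hi => hF i hi j), Finset.mul_sum]

lemma cInt_const_mul (μ : ComplexMeasure ℝ) (c : ℂ) (f : ℝ → ℂ) :
    cInt μ (fun x => c * f x) = c * cInt μ f := by
  simp only [cInt_eq_sum]
  have : ∀ j, ∫ x, c * f x ∂ jparts μ j = c * ∫ x, f x ∂ jparts μ j := by
    intro j
    simpa [smul_eq_mul] using integral_smul (μ := jparts μ j) c f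
  simp only [this, Finset.mul_sum]
  refine Finset.sum_congr rfl fun j _ => ?_
  ring

lemma cInt_indicator (μ : ComplexMeasure ℝ) {E : Set ℝ} (hE : MeasurableSet E) :
    cInt μ (E.indicator (fun _ => (1:ℂ))) = μ E := by
  have key : ∀ s : SignedMeasure ℝ,
      ((∫ x, E.indicator (fun _ => (1:ℂ)) x ∂s.toJordanDecomposition.posPart) -
        ∫ x, E.indicator (fun _ => (1:ℂ)) x ∂s.toJordanDecomposition.negPart) = (s E : ℂ) := by
    intro s
    rw [integral_indicator_const _ hE, integral_indicator_const _ hE]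
    have := s.toSignedMeasure_toJordanDecomposition
    have happ : s E = (s.toJordanDecomposition.posPart E).toReal -
        (s.toJordanDecomposition.negPart E).toReal := by
      conv_lhs => rw [← this]
      rw [JordanDecomposition.toSignedMeasure]
      rw [VectorMeasure.sub_apply, Measure.toSignedMeasure_apply_measurable hE,
        Measure.toSignedMeasure_apply_measurable hE]
      rfl
    rw [happ]
    simp [Complex.real_smul]
    rfl
  rw [cInt]
  rw [key μ.re, key μ.im]
  have : μ E = ((μ E).re : ℂ) + Complex.I * ((μ E).im : ℂ) := by
    rw [mul_comm]; exact (Complex.re_add_im (μ E)).symm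
  rw [this]
  rfl
section Chunk2

variable (w v : ℝ → ℝ)

lemma measurable_indicator_of_continuousOn {h : ℝ → ℂ} (hh : ContinuousOn h (Ici 0)) :
    Measurable ((Ici (0:ℝ)).indicator h) := by
  have he : (Ici (0:ℝ)).indicator h =
      fun x => if hx : x ∈ Ici (0:ℝ) then h ((⟨x, hx⟩ : Ici (0:ℝ)) : ℝ) else (0:ℂ) := by
    funext x
    by_cases hx : x ∈ Ici (0:ℝ) <;> simp [hx]
  rw [he]
  exact Measurable.dite hh.restrict.measurable measurable_const measurableSet_Ici

def innerF (f : ℝ → ℂ) (t : ℝ) : ℝ → ℂ :=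
  fun s => (Ici (0:ℝ)).indicator (fun s' => f (t + s') * ((w (t + s') / w s' : ℝ) : ℂ)) s

def innerI (σk : ComplexMeasure ℝ) (f : ℝ → ℂ) (t : ℝ) : ℂ := cInt σk (innerF w f t)

def outerF (σk : ComplexMeasure ℝ) (f : ℝ → ℂ) : ℝ → ℂ :=
  fun t => (Ici (0:ℝ)).indicator (fun t' => ((t' / v t' : ℝ) : ℂ) * innerI w σk f t') t

def PhiTwo (τm σk : ComplexMeasure ℝ) (f : ℝ → ℂ) : ℂ := cInt τm (outerF w v σk f)

variable {w v}
variable (hwpos : ∀ t ∈ Ici (0:ℝ), 0 < w t)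
  (hwsub : ∀ s ∈ Ici (0:ℝ), ∀ t ∈ Ici (0:ℝ), w (s + t) ≤ w s * w t)

section

include hwpos hwsub

lemma ratio_le {t s : ℝ} (ht : 0 ≤ t) (hs : 0 ≤ s) : w (t + s) / w s ≤ w t := by
  rw [div_le_iff₀ (hwpos s hs)]
  exact hwsub t ht s hs

lemma innerF_norm {f : ℝ → ℂ} {B : ℝ} (hfB : ∀ x, ‖f x‖ ≤ B) (hB : 0 ≤ B)
    {t : ℝ} (ht : 0 ≤ t) : ∀ s, ‖innerF w f t s‖ ≤ B * w t := by
  intro s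
  have hBw : 0 ≤ B * w t := mul_nonneg hB (hwpos t ht).le
  by_cases hs : s ∈ Ici (0:ℝ)
  · rw [innerF, Set.indicator_of_mem hs, norm_mul, Complex.norm_real]
    have h1 : 0 ≤ w (t + s) / w s :=
      div_nonneg (hwpos _ (add_nonneg ht hs)).le (hwpos s hs).le
    rw [Real.norm_eq_abs, abs_of_nonneg h1]
    exact mul_le_mul (hfB _) (ratio_le hwpos hwsub ht hs) h1 hB
  · rw [innerF, Set.indicator_of_notMem hs, norm_zero]
    exact hBw

lemma innerI_norm (σk : ComplexMeasure ℝ) {f : ℝ → ℂ} {B : ℝ}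
    (hfB : ∀ x, ‖f x‖ ≤ B) (hB : 0 ≤ B) {t : ℝ} (ht : 0 ≤ t) :
    ‖innerI w σk f t‖ ≤ B * w t * jmass σk :=
  cInt_norm_le_s17 σk _ (innerF_norm hwpos hwsub hfB hB ht)

end

lemma innerF_meas (hwmeas : Measurable w) {f : ℝ → ℂ} (hfm : Measurable f) (t : ℝ) :
    Measurable (innerF w f t) := by
  refine Measurable.indicator ?_ measurableSet_Ici
  exact (hfm.comp (measurable_const.add measurable_id)).mul
    (Complex.measurable_ofReal.comp
      ((hwmeas.comp (measurable_const.add measurable_id)).div hwmeas))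

lemma innerF_integrable (σk : ComplexMeasure ℝ) (hwmeas : Measurable w)
    (hwpos : ∀ t ∈ Ici (0:ℝ), 0 < w t)
    (hwsub : ∀ s ∈ Ici (0:ℝ), ∀ t ∈ Ici (0:ℝ), w (s + t) ≤ w s * w t)
    {f : ℝ → ℂ} {B : ℝ} (hfm : Measurable f) (hfB : ∀ x, ‖f x‖ ≤ B) (hB : 0 ≤ B)
    {t : ℝ} (ht : 0 ≤ t) (j : Fin 4) : Integrable (innerF w f t) (jparts σk j) :=
  integrable_of_bound σk j (innerF_meas hwmeas hfm t) (innerF_norm hwpos hwsub hfB hB ht)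

lemma innerI_meas (σk : ComplexMeasure ℝ) (hwmeas : Measurable w)
    {f : ℝ → ℂ} (hfm : Measurable f) : Measurable (fun t => innerI w σk f t) := by
  have key : ∀ j : Fin 4, Measurable (fun t => ∫ s, innerF w f t s ∂ jparts σk j) := by
    intro j
    have hjoint : Measurable (fun p : ℝ × ℝ => innerF w f p.1 p.2) := by
      have he : (fun p : ℝ × ℝ => innerF w f p.1 p.2) =
          fun p : ℝ × ℝ => if p.2 ∈ Ici (0:ℝ) then
            f (p.1 + p.2) * ((w (p.1 + p.2) / w p.2 : ℝ) : ℂ) else 0 := by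
        funext p
        rw [innerF, Set.indicator_apply]
      rw [he]
      refine Measurable.ite (measurableSet_Ici.preimage measurable_snd) ?_ measurable_const
      exact (hfm.comp (measurable_fst.add measurable_snd)).mul
        (Complex.measurable_ofReal.comp
          ((hwmeas.comp (measurable_fst.add measurable_snd)).div (hwmeas.comp measurable_snd)))
    exact (MeasureTheory.StronglyMeasurable.integral_prod_right'
      (hjoint.stronglyMeasurable)).measurable
  have he : (fun t => innerI w σk f t) =
      fun t => ∑ j, jcoef j * ∫ s, innerF w f t s ∂ jparts σk j := by
    funext t
    exact cInt_eq_sum σk (innerF w f t)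
  rw [he]
  exact Finset.measurable_sum _ fun j _ => measurable_const.mul (key j)

lemma outerF_meas (σk : ComplexMeasure ℝ) (hwmeas : Measurable w) (hvmeas : Measurable v)
    {f : ℝ → ℂ} (hfm : Measurable f) : Measurable (outerF w v σk f) := by
  refine Measurable.indicator ?_ measurableSet_Ici
  exact (Complex.measurable_ofReal.comp (measurable_id.div hvmeas)).mul
    (innerI_meas σk hwmeas hfm)

lemma outerF_norm (σk : ComplexMeasure ℝ)
    (hwpos : ∀ t ∈ Ici (0:ℝ), 0 < w t)
    (hwsub : ∀ s ∈ Ici (0:ℝ), ∀ t ∈ Ici (0:ℝ), w (s + t) ≤ w s * w t)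
    (hvpos : ∀ t ∈ Ici (0:ℝ), 0 < v t)
    {C : ℝ} (hC : ∀ t ∈ Ici (0:ℝ), t * w t ≤ C * v t) (hC0 : 0 ≤ C)
    {f : ℝ → ℂ} {B : ℝ} (hfB : ∀ x, ‖f x‖ ≤ B) (hB : 0 ≤ B) :
    ∀ t, ‖outerF w v σk f t‖ ≤ C * B * jmass σk := by
  intro t
  have hnn : 0 ≤ C * B * jmass σk := by
    have := jmass_nonneg σk; positivity
  by_cases ht : t ∈ Ici (0:ℝ)
  · rw [outerF, Set.indicator_of_mem ht, norm_mul, Complex.norm_real]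
    have ht0 : (0:ℝ) ≤ t := ht
    have hv : 0 < v t := hvpos t ht
    have h1 : |t / v t| = t / v t := abs_of_nonneg (div_nonneg ht0 hv.le)
    rw [Real.norm_eq_abs, h1]
    have h2 : ‖innerI w σk f t‖ ≤ B * w t * jmass σk :=
      innerI_norm hwpos hwsub σk hfB hB ht0
    calc t / v t * ‖innerI w σk f t‖ ≤ t / v t * (B * w t * jmass σk) := by
          refine mul_le_mul_of_nonneg_left h2 (div_nonneg ht0 hv.le)
      _ = (t * w t) / v t * (B * jmass σk) := by ring
      _ ≤ C * (B * jmass σk) := by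
          refine mul_le_mul_of_nonneg_right ?_ (mul_nonneg hB (jmass_nonneg σk))
          rw [div_le_iff₀ hv]
          exact hC t ht
      _ = C * B * jmass σk := by ring
  · rw [outerF, Set.indicator_of_notMem ht, norm_zero]
    exact hnn

lemma outerF_integrable (τm σk : ComplexMeasure ℝ) (hwmeas : Measurable w)
    (hvmeas : Measurable v)
    (hwpos : ∀ t ∈ Ici (0:ℝ), 0 < w t)
    (hwsub : ∀ s ∈ Ici (0:ℝ), ∀ t ∈ Ici (0:ℝ), w (s + t) ≤ w s * w t)
    (hvpos : ∀ t ∈ Ici (0:ℝ), 0 < v t)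
    {C : ℝ} (hC : ∀ t ∈ Ici (0:ℝ), t * w t ≤ C * v t) (hC0 : 0 ≤ C)
    {f : ℝ → ℂ} {B : ℝ} (hfm : Measurable f) (hfB : ∀ x, ‖f x‖ ≤ B) (hB : 0 ≤ B)
    (j : Fin 4) : Integrable (outerF w v σk f) (jparts τm j) :=
  integrable_of_bound τm j (outerF_meas σk hwmeas hvmeas hfm)
    (outerF_norm σk hwpos hwsub hvpos hC hC0 hfB hB)

lemma phiTwo_norm (τm σk : ComplexMeasure ℝ)
    (hwpos : ∀ t ∈ Ici (0:ℝ), 0 < w t)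
    (hwsub : ∀ s ∈ Ici (0:ℝ), ∀ t ∈ Ici (0:ℝ), w (s + t) ≤ w s * w t)
    (hvpos : ∀ t ∈ Ici (0:ℝ), 0 < v t)
    {C : ℝ} (hC : ∀ t ∈ Ici (0:ℝ), t * w t ≤ C * v t) (hC0 : 0 ≤ C)
    {f : ℝ → ℂ} {B : ℝ} (hfB : ∀ x, ‖f x‖ ≤ B) (hB : 0 ≤ B) :
    ‖PhiTwo w v τm σk f‖ ≤ C * B * jmass σk * jmass τm :=
  cInt_norm_le_s17 τm _ (outerF_norm σk hwpos hwsub hvpos hC hC0 hfB hB)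

end Chunk2
section Chunk3

variable {w v : ℝ → ℝ}

lemma innerF_sub (f g : ℝ → ℂ) (t : ℝ) :
    innerF w (fun x => f x - g x) t = fun s => innerF w f t s - innerF w g t s := by
  funext s
  by_cases hs : s ∈ Ici (0:ℝ)
  · simp only [innerF, Set.indicator_of_mem hs]
    ring
  · simp only [innerF, Set.indicator_of_notMem hs, sub_zero]

lemma innerF_const_mul (c : ℂ) (f : ℝ → ℂ) (t : ℝ) :
    innerF w (fun x => c * f x) t = fun s => c * innerF w f t s := by
  funext s
  by_cases hs : s ∈ Ici (0:ℝ)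
  · simp only [innerF, Set.indicator_of_mem hs]
    ring
  · simp only [innerF, Set.indicator_of_notMem hs, mul_zero]

lemma innerF_sum {ι : Type} (S : Finset ι) (F : ι → ℝ → ℂ) (t : ℝ) :
    innerF w (fun x => ∑ i ∈ S, F i x) t = fun s => ∑ i ∈ S, innerF w (F i) t s := by
  funext s
  by_cases hs : s ∈ Ici (0:ℝ)
  · simp only [innerF, Set.indicator_of_mem hs]
    rw [Finset.sum_mul]
  · simp only [innerF, Set.indicator_of_notMem hs]
    rw [Finset.sum_const_zero]

lemma PhiTwo_sub (τm σk : ComplexMeasure ℝ) (hwmeas : Measurable w) (hvmeas : Measurable v)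
    (hwpos : ∀ t ∈ Ici (0:ℝ), 0 < w t)
    (hwsub : ∀ s ∈ Ici (0:ℝ), ∀ t ∈ Ici (0:ℝ), w (s + t) ≤ w s * w t)
    (hvpos : ∀ t ∈ Ici (0:ℝ), 0 < v t)
    {C : ℝ} (hC : ∀ t ∈ Ici (0:ℝ), t * w t ≤ C * v t) (hC0 : 0 ≤ C)
    {f g : ℝ → ℂ} {Bf Bg : ℝ} (hfm : Measurable f) (hfB : ∀ x, ‖f x‖ ≤ Bf) (hBf : 0 ≤ Bf)
    (hgm : Measurable g) (hgB : ∀ x, ‖g x‖ ≤ Bg) (hBg : 0 ≤ Bg) :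
    PhiTwo w v τm σk (fun x => f x - g x) = PhiTwo w v τm σk f - PhiTwo w v τm σk g := by
  have houter : outerF w v σk (fun x => f x - g x) =
      fun t => outerF w v σk f t - outerF w v σk g t := by
    funext t
    by_cases ht : t ∈ Ici (0:ℝ)
    · simp only [outerF, Set.indicator_of_mem ht]
      have hinner : innerI w σk (fun x => f x - g x) t = innerI w σk f t - innerI w σk g t := by
        rw [innerI, innerF_sub]
        exact cInt_sub σk
          (fun j => innerF_integrable σk hwmeas hwpos hwsub hfm hfB hBf ht j)
          (fun j => innerF_integrable σk hwmeas hwpos hwsub hgm hgB hBg ht j)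
      rw [show innerI w σk (fun x => f x - g x) t = cInt σk (innerF w (fun x => f x - g x) t)
        from rfl] at hinner
      rw [innerI, hinner, innerI, innerI]
      ring
    · simp only [outerF, Set.indicator_of_notMem ht, sub_zero]
  rw [PhiTwo, houter, PhiTwo, PhiTwo]
  exact cInt_sub τm
    (fun j => outerF_integrable τm σk hwmeas hvmeas hwpos hwsub hvpos hC hC0 hfm hfB hBf j)
    (fun j => outerF_integrable τm σk hwmeas hvmeas hwpos hwsub hvpos hC hC0 hgm hgB hBg j)

lemma PhiTwo_const_mul (τm σk : ComplexMeasure ℝ) (c : ℂ) (f : ℝ → ℂ) :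
    PhiTwo w v τm σk (fun x => c * f x) = c * PhiTwo w v τm σk f := by
  have houter : outerF w v σk (fun x => c * f x) = fun t => c * outerF w v σk f t := by
    funext t
    by_cases ht : t ∈ Ici (0:ℝ)
    · simp only [outerF, Set.indicator_of_mem ht]
      have hinner : innerI w σk (fun x => c * f x) t = c * innerI w σk f t := by
        rw [innerI, innerF_const_mul]
        exact cInt_const_mul σk c (innerF w f t)
      rw [hinner]
      ring
    · simp only [outerF, Set.indicator_of_notMem ht, mul_zero]
  rw [PhiTwo, houter]
  exact cInt_const_mul τm c (outerF w v σk f)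

lemma PhiTwo_sum {ι : Type} (τm σk : ComplexMeasure ℝ)
    (hwmeas : Measurable w) (hvmeas : Measurable v)
    (hwpos : ∀ t ∈ Ici (0:ℝ), 0 < w t)
    (hwsub : ∀ s ∈ Ici (0:ℝ), ∀ t ∈ Ici (0:ℝ), w (s + t) ≤ w s * w t)
    (hvpos : ∀ t ∈ Ici (0:ℝ), 0 < v t)
    {C : ℝ} (hC : ∀ t ∈ Ici (0:ℝ), t * w t ≤ C * v t) (hC0 : 0 ≤ C)
    (S : Finset ι) (F : ι → ℝ → ℂ)
    (hF : ∀ i ∈ S, Measurable (F i) ∧ ∃ B : ℝ, 0 ≤ B ∧ ∀ x, ‖F i x‖ ≤ B) :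
    PhiTwo w v τm σk (fun x => ∑ i ∈ S, F i x) = ∑ i ∈ S, PhiTwo w v τm σk (F i) := by
  have houter : outerF w v σk (fun x => ∑ i ∈ S, F i x) =
      fun t => ∑ i ∈ S, outerF w v σk (F i) t := by
    funext t
    by_cases ht : t ∈ Ici (0:ℝ)
    · simp only [outerF, Set.indicator_of_mem ht]
      have hinner : innerI w σk (fun x => ∑ i ∈ S, F i x) t =
          ∑ i ∈ S, innerI w σk (F i) t := by
        rw [innerI, innerF_sum]
        exact cInt_finset_sum σk S (fun i => innerF w (F i) t) (fun i hi j => by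
          obtain ⟨hm, B, hB0, hB⟩ := hF i hi
          exact innerF_integrable σk hwmeas hwpos hwsub hm hB hB0 ht j)
      rw [hinner, Finset.mul_sum]
    · simp only [outerF, Set.indicator_of_notMem ht]
      rw [Finset.sum_const_zero]
  rw [PhiTwo, houter]
  exact cInt_finset_sum τm S (fun i => outerF w v σk (F i)) (fun i hi j => by
    obtain ⟨hm, B, hB0, hB⟩ := hF i hi
    exact outerF_integrable τm σk hwmeas hvmeas hwpos hwsub hvpos hC hC0 hm hB hB0 j)

lemma PhiTwo_indicator_eq (τm σk : ComplexMeasure ℝ)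
    (hτc : ConcOn τm (Ici 0)) (hσc : ConcOn σk (Ici 0))
    (E : Set ℝ) :
    (cInt τm fun t => ((t / v t : ℝ) : ℂ) *
        cInt σk fun s => E.indicator (fun u => ((w u : ℝ) : ℂ)) (t + s) / ((w s : ℝ) : ℂ)) =
      PhiTwo w v τm σk (E.indicator (fun _ => (1:ℂ))) := by
  rw [PhiTwo]
  refine cInt_congr_s17 hτc fun t ht => ?_
  rw [outerF, Set.indicator_of_mem ht]
  congr 1
  rw [innerI]
  refine cInt_congr_s17 hσc fun s hs => ?_
  rw [innerF, Set.indicator_of_mem hs]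
  by_cases hts : t + s ∈ E
  · rw [Set.indicator_of_mem hts, Set.indicator_of_mem hts, Complex.ofReal_div]
    ring
  · rw [Set.indicator_of_notMem hts, Set.indicator_of_notMem hts, zero_div, zero_mul]

end Chunk3
section Chunk4

lemma floor_close {r ε : ℝ} (hε : 0 < ε) : |r - ε * ⌊r / ε⌋| ≤ ε := by
  have h1 : (⌊r / ε⌋ : ℝ) ≤ r / ε := Int.floor_le _
  have h2 : r / ε < ⌊r / ε⌋ + 1 := Int.lt_floor_add_one _
  have h3 : ε * (r / ε) = r := by field_simp
  rw [abs_le]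
  constructor <;> nlinarith

lemma grid_approx {f : ℝ → ℂ} (hfm : Measurable f) {B : ℝ} (hfB : ∀ x, ‖f x‖ ≤ B)
    (hf0 : ∀ x, x ∉ Ici (0:ℝ) → f x = 0) {ε N : ℝ} (hε : 0 < ε)
    (hfar : ∀ x, N ≤ x → ‖f x‖ ≤ ε) :
    ∃ (S : Finset (ℤ × ℤ)) (c : ℤ × ℤ → ℂ) (E : ℤ × ℤ → Set ℝ),
      (∀ p, MeasurableSet (E p) ∧ E p ⊆ Icc 0 N) ∧
      (∀ x, ‖f x - ∑ p ∈ S, c p * (E p).indicator (fun _ => (1:ℂ)) x‖ ≤ 2 * ε) := by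
  set M : ℤ := ⌈B / ε⌉ + 1 with hM
  set E : ℤ × ℤ → Set ℝ := fun p =>
    (Icc 0 N ∩ (fun x => (f x).re / ε) ⁻¹' Ico (p.1 : ℝ) ((p.1 : ℝ) + 1)) ∩
      (fun x => (f x).im / ε) ⁻¹' Ico (p.2 : ℝ) ((p.2 : ℝ) + 1) with hE
  refine ⟨Finset.Icc (-M) M ×ˢ Finset.Icc (-M) M,
    fun p => ((ε * p.1 : ℝ) : ℂ) + ((ε * p.2 : ℝ) : ℂ) * Complex.I, E, ?_, ?_⟩
  · intro p
    refine ⟨?_, fun x hx => hx.1.1⟩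
    exact ((measurableSet_Icc.inter
      (((Complex.measurable_re.comp hfm).div measurable_const) measurableSet_Ico)).inter
      (((Complex.measurable_im.comp hfm).div measurable_const) measurableSet_Ico))
  · intro x
    by_cases hx : x ∈ Icc (0:ℝ) N
    · set p₀ : ℤ × ℤ := (⌊(f x).re / ε⌋, ⌊(f x).im / ε⌋) with hp₀
      have hBnn : 0 ≤ B := le_trans (norm_nonneg _) (hfB x)
      have habs : ∀ r : ℝ, |r| ≤ ‖f x‖ → ⌊r / ε⌋ ∈ Finset.Icc (-M) M := by
        intro r hr
        have hrB : |r| ≤ B := hr.trans (hfB x)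
        have hr1 : -B ≤ r := (abs_le.1 hrB).1
        have hr2 : r ≤ B := (abs_le.1 hrB).2
        have hd1 : r / ε ≤ B / ε := by gcongr
        have hd2 : -(B / ε) ≤ r / ε := by rw [neg_div']; gcongr
        have hce : B / ε ≤ (⌈B / ε⌉ : ℝ) := Int.le_ceil _
        have hfl : (⌊r / ε⌋ : ℝ) ≤ r / ε := Int.floor_le _
        have hfl2 : r / ε - 1 < (⌊r / ε⌋ : ℝ) := Int.sub_one_lt_floor _
        rw [Finset.mem_Icc]
        constructor
        · have hlt : (-M : ℝ) < (⌊r / ε⌋ : ℝ) := by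
            push_cast [hM]
            nlinarith
          exact le_of_lt (by exact_mod_cast hlt)
        · have hle : (⌊r / ε⌋ : ℝ) ≤ (M : ℝ) := by
            push_cast [hM]
            nlinarith
          exact_mod_cast hle
      have hmem : p₀ ∈ Finset.Icc (-M) M ×ˢ Finset.Icc (-M) M := by
        rw [Finset.mem_product]
        exact ⟨habs _ (by exact Complex.abs_re_le_norm _),
          habs _ (by exact Complex.abs_im_le_norm _)⟩
      have hsum : ∑ p ∈ Finset.Icc (-M) M ×ˢ Finset.Icc (-M) M,
          (((ε * p.1 : ℝ) : ℂ) + ((ε * p.2 : ℝ) : ℂ) * Complex.I) *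
            (E p).indicator (fun _ => (1:ℂ)) x =
          ((ε * p₀.1 : ℝ) : ℂ) + ((ε * p₀.2 : ℝ) : ℂ) * Complex.I := by
        rw [Finset.sum_eq_single_of_mem p₀ hmem]
        · have hxE : x ∈ E p₀ := by
            refine ⟨⟨hx, ⟨Int.floor_le _, Int.lt_floor_add_one _⟩⟩,
              ⟨Int.floor_le _, Int.lt_floor_add_one _⟩⟩
          rw [Set.indicator_of_mem hxE, mul_one]
        · intro q hq hne
          have hxE : x ∉ E q := by
            intro hxE
            apply hne
            obtain ⟨⟨_, hre⟩, him⟩ := hxE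
            have h1 : ⌊(f x).re / ε⌋ = q.1 := Int.floor_eq_iff.2 ⟨hre.1, hre.2⟩
            have h2 : ⌊(f x).im / ε⌋ = q.2 := Int.floor_eq_iff.2 ⟨him.1, him.2⟩
            exact Prod.ext (by rw [← h1]) (by rw [← h2])
          rw [Set.indicator_of_notMem hxE, mul_zero]
      rw [hsum]
      have hre : (f x - (((ε * p₀.1 : ℝ) : ℂ) + ((ε * p₀.2 : ℝ) : ℂ) * Complex.I)).re =
          (f x).re - ε * ⌊(f x).re / ε⌋ := by simp [hp₀]
      have him : (f x - (((ε * p₀.1 : ℝ) : ℂ) + ((ε * p₀.2 : ℝ) : ℂ) * Complex.I)).im =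
          (f x).im - ε * ⌊(f x).im / ε⌋ := by simp [hp₀]
      calc ‖f x - (((ε * p₀.1 : ℝ) : ℂ) + ((ε * p₀.2 : ℝ) : ℂ) * Complex.I)‖
          ≤ |(f x - (((ε * p₀.1 : ℝ) : ℂ) + ((ε * p₀.2 : ℝ) : ℂ) * Complex.I)).re| +
            |(f x - (((ε * p₀.1 : ℝ) : ℂ) + ((ε * p₀.2 : ℝ) : ℂ) * Complex.I)).im| := by
            exact Complex.norm_le_abs_re_add_abs_im _
        _ ≤ 2 * ε := by
            rw [hre, him]
            have := floor_close (r := (f x).re) hε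
            have := floor_close (r := (f x).im) hε
            linarith
    · have hsum : ∑ p ∈ Finset.Icc (-M) M ×ˢ Finset.Icc (-M) M,
          (((ε * p.1 : ℝ) : ℂ) + ((ε * p.2 : ℝ) : ℂ) * Complex.I) *
            (E p).indicator (fun _ => (1:ℂ)) x = 0 := by
        refine Finset.sum_eq_zero fun q _ => ?_
        have hxE : x ∉ E q := fun h => hx h.1.1
        rw [Set.indicator_of_notMem hxE, mul_zero]
      rw [hsum, sub_zero]
      by_cases h0 : (0:ℝ) ≤ x
      · have hNx : N ≤ x := by
          by_contra hNx
          exact hx ⟨h0, le_of_lt (lt_of_not_ge hNx)⟩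
        linarith [hfar x hNx]
      · rw [hf0 x h0, norm_zero]
        linarith

end Chunk4
section Chunk5

lemma adjoint_master {w v : ℝ → ℝ} (σk τm σρk : ComplexMeasure ℝ)
    (hσc : ConcOn σk (Ici 0)) (hτc : ConcOn τm (Ici 0)) (hσρc : ConcOn σρk (Ici 0))
    (hwmeas : Measurable w) (hwpos : ∀ t ∈ Ici (0:ℝ), 0 < w t)
    (hwsub : ∀ s ∈ Ici (0:ℝ), ∀ t ∈ Ici (0:ℝ), w (s + t) ≤ w s * w t)
    (hvmeas : Measurable v) (hvpos : ∀ t ∈ Ici (0:ℝ), 0 < v t)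
    {C : ℝ} (hC : ∀ t ∈ Ici (0:ℝ), t * w t ≤ C * v t)
    (hXC : ∀ E : Set ℝ, MeasurableSet E → Bornology.IsBounded E →
      σρk E = cInt τm fun t => ((t / v t : ℝ) : ℂ) *
        cInt σk fun s => E.indicator (fun u => ((w u : ℝ) : ℂ)) (t + s) / ((w s : ℝ) : ℂ))
    (h : ℝ → ℂ) (hh1 : ContinuousOn h (Ici 0))
    (hh2 : ∃ D : ℝ, ∀ t ∈ Ici (0:ℝ), ‖h t‖ ≤ D * w t)
    (hh3 : Tendsto (fun t => ‖h t‖ / w t) atTop (nhds 0)) :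
    (cInt σρk fun t => h t / ((w t : ℝ) : ℂ)) =
      cInt τm fun t =>
        ((t : ℂ) * cInt σk fun s => h (t + s) / ((w s : ℝ) : ℂ)) / ((v t : ℝ) : ℂ) := by
  have hC0 : 0 ≤ C := by
    have h1 := hC 1 (by norm_num)
    have h2 := hwpos 1 (by norm_num)
    have h3 := hvpos 1 (by norm_num)
    nlinarith
  obtain ⟨D, hD⟩ := hh2
  set D₀ : ℝ := max D 0 with hD₀def
  have hD₀0 : 0 ≤ D₀ := le_max_right _ _
  have hD₀ : ∀ t ∈ Ici (0:ℝ), ‖h t‖ ≤ D₀ * w t := fun t ht =>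
    (hD t ht).trans (mul_le_mul_of_nonneg_right (le_max_left _ _) (hwpos t ht).le)
  set H : ℝ → ℂ := (Ici (0:ℝ)).indicator h with hHdef
  have hHmeas : Measurable H := measurable_indicator_of_continuousOn hh1
  set f : ℝ → ℂ := (Ici (0:ℝ)).indicator (fun u => H u / ((w u : ℝ) : ℂ)) with hfdef
  have hfm : Measurable f :=
    (hHmeas.div (Complex.measurable_ofReal.comp hwmeas)).indicator measurableSet_Ici
  have hfval0 : ∀ x ∈ Ici (0:ℝ), f x = h x / ((w x : ℝ) : ℂ) := by
    intro x hx
    rw [hfdef, Set.indicator_of_mem hx, hHdef, Set.indicator_of_mem hx]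
  have hfval : ∀ x ∈ Ici (0:ℝ), ‖f x‖ = ‖h x‖ / w x := by
    intro x hx
    rw [hfval0 x hx, norm_div, Complex.norm_real, Real.norm_eq_abs,
      abs_of_pos (hwpos x hx)]
  have hfB : ∀ x, ‖f x‖ ≤ D₀ := by
    intro x
    by_cases hx : x ∈ Ici (0:ℝ)
    · rw [hfval x hx, div_le_iff₀ (hwpos x hx)]
      exact hD₀ x hx
    · rw [hfdef, Set.indicator_of_notMem hx, norm_zero]
      exact hD₀0
  have hf0 : ∀ x, x ∉ Ici (0:ℝ) → f x = 0 := fun x hx => Set.indicator_of_notMem hx _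
  -- reduce both sides to f
  have hLHS : (cInt σρk fun t => h t / ((w t : ℝ) : ℂ)) = cInt σρk f :=
    cInt_congr_s17 hσρc fun t ht => (hfval0 t ht).symm
  have hRHS : (cInt τm fun t =>
      ((t : ℂ) * cInt σk fun s => h (t + s) / ((w s : ℝ) : ℂ)) / ((v t : ℝ) : ℂ)) =
      PhiTwo w v τm σk f := by
    refine cInt_congr_s17 hτc fun t ht => ?_
    have ht0 : (0:ℝ) ≤ t := ht
    show _ = outerF w v σk f t
    rw [outerF, Set.indicator_of_mem ht]
    have hinner : (cInt σk fun s => h (t + s) / ((w s : ℝ) : ℂ)) = innerI w σk f t := by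
      rw [innerI]
      refine cInt_congr_s17 hσc fun s hs => ?_
      have hs0 : (0:ℝ) ≤ s := hs
      have hts : t + s ∈ Ici (0:ℝ) := add_nonneg ht0 hs0
      rw [innerF, Set.indicator_of_mem hs, hfval0 _ hts, Complex.ofReal_div]
      have hne1 : ((w (t + s) : ℝ) : ℂ) ≠ 0 :=
        Complex.ofReal_ne_zero.2 (hwpos _ hts).ne'
      have hne2 : ((w s : ℝ) : ℂ) ≠ 0 := Complex.ofReal_ne_zero.2 (hwpos s hs).ne'
      field_simp
    rw [hinner, Complex.ofReal_div]
    ring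
  rw [hLHS, hRHS]
  -- now f vs PhiTwo f via approximation
  have hmain : ∀ ε : ℝ, 0 < ε →
      ‖cInt σρk f - PhiTwo w v τm σk f‖ ≤
        2 * (jmass σρk + C * jmass σk * jmass τm) * ε := by
    intro ε hε
    obtain ⟨T, hT⟩ := (Metric.tendsto_atTop.1 hh3) ε hε
    set N : ℝ := max T 0 with hNdef
    have hfar : ∀ x, N ≤ x → ‖f x‖ ≤ ε := by
      intro x hx
      have hx0 : x ∈ Ici (0:ℝ) := le_trans (le_max_right _ _) hx
      have hxT : T ≤ x := le_trans (le_max_left _ _) hx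
      have := hT x hxT
      rw [Real.dist_eq, sub_zero] at this
      rw [hfval x hx0]
      exact le_of_lt (lt_of_abs_lt this)
    obtain ⟨S, c, E, hE, hclose⟩ := grid_approx hfm hfB hf0 hε hfar
    set φ : ℝ → ℂ := fun x => ∑ p ∈ S, c p * (E p).indicator (fun _ => (1:ℂ)) x with hφdef
    have hφm : Measurable φ :=
      Finset.measurable_sum _ fun p _ =>
        (measurable_const.indicator (hE p).1).const_mul (c p)
    have hφB : ∀ x, ‖φ x‖ ≤ D₀ + 2 * ε := by
      intro x
      calc ‖φ x‖ = ‖f x - (f x - φ x)‖ := by ring_nf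
        _ ≤ ‖f x‖ + ‖f x - φ x‖ := norm_sub_le _ _
        _ ≤ D₀ + 2 * ε := add_le_add (hfB x) (hclose x)
    have hφB0 : 0 ≤ D₀ + 2 * ε := by linarith
    -- Φ₁ φ = Φ₂ φ
    have hterm : ∀ p ∈ S, Measurable (fun x => c p * (E p).indicator (fun _ => (1:ℂ)) x) ∧
        ∃ B : ℝ, 0 ≤ B ∧ ∀ x, ‖c p * (E p).indicator (fun _ => (1:ℂ)) x‖ ≤ B := by
      intro p _
      refine ⟨(measurable_const.indicator (hE p).1).const_mul (c p), ‖c p‖, norm_nonneg _, ?_⟩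
      intro x
      rw [norm_mul]
      by_cases hx : x ∈ E p
      · rw [Set.indicator_of_mem hx]
        simp
      · rw [Set.indicator_of_notMem hx]
        simp
    have hφeq : cInt σρk φ = PhiTwo w v τm σk φ := by
      have h1 : cInt σρk φ = ∑ p ∈ S, c p * σρk (E p) := by
        rw [hφdef, cInt_finset_sum σρk S _ (fun p hp j => by
          obtain ⟨hm, B, hB0, hB⟩ := hterm p hp
          exact integrable_of_bound σρk j hm hB)]
        refine Finset.sum_congr rfl fun p _ => ?_
        rw [cInt_const_mul, cInt_indicator σρk (hE p).1]
      have h2 : PhiTwo w v τm σk φ = ∑ p ∈ S, c p * PhiTwo w v τm σk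
          ((E p).indicator (fun _ => (1:ℂ))) := by
        rw [hφdef, PhiTwo_sum τm σk hwmeas hvmeas hwpos hwsub hvpos hC hC0 S _ hterm]
        exact Finset.sum_congr rfl fun p _ => PhiTwo_const_mul τm σk (c p) _
      rw [h1, h2]
      refine Finset.sum_congr rfl fun p _ => ?_
      congr 1
      rw [hXC (E p) (hE p).1 ((Metric.isBounded_Icc 0 N).subset (hE p).2)]
      exact PhiTwo_indicator_eq τm σk hτc hσc (E p)
    -- estimates
    have hd1 : ‖cInt σρk f - cInt σρk φ‖ ≤ 2 * ε * jmass σρk := by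
      rw [← cInt_sub σρk (fun j => integrable_of_bound σρk j hfm hfB)
        (fun j => integrable_of_bound σρk j hφm hφB)]
      exact cInt_norm_le_s17 σρk _ hclose
    have hd2 : ‖PhiTwo w v τm σk f - PhiTwo w v τm σk φ‖ ≤
        C * (2 * ε) * jmass σk * jmass τm := by
      rw [← PhiTwo_sub τm σk hwmeas hvmeas hwpos hwsub hvpos hC hC0 hfm hfB hD₀0
        hφm hφB hφB0]
      exact phiTwo_norm τm σk hwpos hwsub hvpos hC hC0 hclose (by linarith)
    calc ‖cInt σρk f - PhiTwo w v τm σk f‖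
        = ‖(cInt σρk f - cInt σρk φ) - (PhiTwo w v τm σk f - PhiTwo w v τm σk φ)‖ := by
          rw [hφeq]; ring_nf
      _ ≤ ‖cInt σρk f - cInt σρk φ‖ + ‖PhiTwo w v τm σk f - PhiTwo w v τm σk φ‖ :=
          norm_sub_le _ _
      _ ≤ 2 * ε * jmass σρk + C * (2 * ε) * jmass σk * jmass τm := add_le_add hd1 hd2
      _ = 2 * (jmass σρk + C * jmass σk * jmass τm) * ε := by ring
  have hzero : ‖cInt σρk f - PhiTwo w v τm σk f‖ ≤ 0 := by
    set K : ℝ := 2 * (jmass σρk + C * jmass σk * jmass τm) with hK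
    have hK0 : 0 ≤ K := by
      have := jmass_nonneg σρk
      have := jmass_nonneg σk
      have := jmass_nonneg τm
      positivity
    refine le_of_forall_pos_le_add fun ε hε => ?_
    have := hmain (ε / (K + 1)) (by positivity)
    calc ‖cInt σρk f - PhiTwo w v τm σk f‖ ≤ K * (ε / (K + 1)) := this
      _ ≤ ε := by
          have hK1 : (0:ℝ) < K + 1 := by linarith
          rw [mul_comm, div_mul_eq_mul_div, div_le_iff₀ hK1]
          nlinarith
      _ = 0 + ε := by ring
  exact sub_eq_zero.mp (norm_le_zero_iff.1 hzero)
section Chunk6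

def Ffun (w : ℝ → ℝ) (H : ℝ → ℂ) (t : ℝ) : ℝ → ℂ :=
  fun s => (Ici (0:ℝ)).indicator (fun s' => H (t + s') / ((w s' : ℝ) : ℂ)) s

lemma Ffun_of_mem (w : ℝ → ℝ) (H : ℝ → ℂ) (t : ℝ) {s : ℝ} (hs : s ∈ Ici (0:ℝ)) :
    Ffun w H t s = H (t + s) / ((w s : ℝ) : ℂ) := Set.indicator_of_mem hs _

lemma Ffun_of_not_mem (w : ℝ → ℝ) (H : ℝ → ℂ) (t : ℝ) {s : ℝ} (hs : s ∉ Ici (0:ℝ)) :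
    Ffun w H t s = 0 := Set.indicator_of_notMem hs _

def Gfun (σk : ComplexMeasure ℝ) (w : ℝ → ℝ) (H : ℝ → ℂ) (t : ℝ) : ℂ :=
  cInt σk (Ffun w H t)

variable {w v : ℝ → ℝ}

lemma Tmu_props (σk : ComplexMeasure ℝ) (hσc : ConcOn σk (Ici 0))
    (hwmeas : Measurable w) (hwpos : ∀ t ∈ Ici (0:ℝ), 0 < w t)
    (hwloc : ∀ T : ℝ, ∃ Cl : ℝ, ∀ t ∈ Icc (0:ℝ) T, w t ≤ Cl ∧ 1 / w t ≤ Cl)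
    (hwsub : ∀ s ∈ Ici (0:ℝ), ∀ t ∈ Ici (0:ℝ), w (s + t) ≤ w s * w t)
    (hvpos : ∀ t ∈ Ici (0:ℝ), 0 < v t)
    {C : ℝ} (hC : ∀ t ∈ Ici (0:ℝ), t * w t ≤ C * v t)
    (h : ℝ → ℂ) (hh1 : ContinuousOn h (Ici 0))
    (hh2 : ∃ D : ℝ, ∀ t ∈ Ici (0:ℝ), ‖h t‖ ≤ D * w t)
    (hh3 : Tendsto (fun t => ‖h t‖ / w t) atTop (nhds 0)) :
    ContinuousOn (fun t : ℝ => (t : ℂ) * cInt σk fun s => h (t + s) / ((w s : ℝ) : ℂ))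
        (Ici 0) ∧
      (∃ D : ℝ, ∀ t ∈ Ici (0:ℝ),
        ‖(t : ℂ) * cInt σk fun s => h (t + s) / ((w s : ℝ) : ℂ)‖ ≤ D * v t) ∧
      Tendsto (fun t : ℝ =>
        ‖(t : ℂ) * cInt σk fun s => h (t + s) / ((w s : ℝ) : ℂ)‖ / v t) atTop (nhds 0) := by
  have hC0 : 0 ≤ C := by
    have h1 := hC 1 (by norm_num)
    have h2 := hwpos 1 (by norm_num)
    have h3 := hvpos 1 (by norm_num)
    nlinarith
  obtain ⟨D, hD⟩ := hh2
  have hD₀0 : (0:ℝ) ≤ max D 0 := le_max_right _ _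
  set D₀ : ℝ := max D 0 with hD₀def
  have hD₀ : ∀ t ∈ Ici (0:ℝ), ‖h t‖ ≤ D₀ * w t := fun t ht =>
    (hD t ht).trans (mul_le_mul_of_nonneg_right (le_max_left _ _) (hwpos t ht).le)
  have hHmeas : Measurable ((Ici (0:ℝ)).indicator h) :=
    measurable_indicator_of_continuousOn hh1
  have hGval : ∀ t ∈ Ici (0:ℝ),
      (cInt σk fun s => h (t + s) / ((w s : ℝ) : ℂ)) =
        Gfun σk w ((Ici (0:ℝ)).indicator h) t := by
    intro t ht
    refine cInt_congr_s17 hσc fun s hs => ?_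
    have hts : t + s ∈ Ici (0:ℝ) := by
      have h1 : (0:ℝ) ≤ t := ht
      have h2 : (0:ℝ) ≤ s := hs
      exact add_nonneg h1 h2
    rw [Ffun_of_mem w _ t hs, Set.indicator_of_mem hts]
  have hFnorm : ∀ A : ℝ, 0 ≤ A → ∀ t ∈ Ici (0:ℝ),
      (∀ u, t ≤ u → 0 ≤ u → ‖h u‖ ≤ A * w u) →
      ∀ s, ‖Ffun w ((Ici (0:ℝ)).indicator h) t s‖ ≤ A * w t := by
    intro A hA t ht hAh s
    have hAw : 0 ≤ A * w t := mul_nonneg hA (hwpos t ht).le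
    by_cases hs : s ∈ Ici (0:ℝ)
    · have hs0 : (0:ℝ) ≤ s := hs
      have hts : t + s ∈ Ici (0:ℝ) := add_nonneg ht hs0
      rw [Ffun_of_mem w _ t hs, Set.indicator_of_mem hts, norm_div,
        Complex.norm_real, Real.norm_eq_abs, abs_of_pos (hwpos s hs)]
      have hnum : ‖h (t + s)‖ ≤ A * w (t + s) :=
        hAh (t + s) (le_add_of_nonneg_right hs0) hts
      have hws : (0:ℝ) ≤ w s := (hwpos s hs).le
      calc ‖h (t + s)‖ / w s ≤ (A * w (t + s)) / w s := by gcongr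
        _ = A * (w (t + s) / w s) := by ring
        _ ≤ A * w t := mul_le_mul_of_nonneg_left (ratio_le hwpos hwsub ht hs0) hA
    · rw [Ffun_of_not_mem w _ t hs, norm_zero]
      exact hAw
  have hGnorm : ∀ A : ℝ, 0 ≤ A → ∀ t ∈ Ici (0:ℝ),
      (∀ u, t ≤ u → 0 ≤ u → ‖h u‖ ≤ A * w u) →
      ‖Gfun σk w ((Ici (0:ℝ)).indicator h) t‖ ≤ A * w t * jmass σk := fun A hA t ht hAh =>
    cInt_norm_le_s17 σk _ (hFnorm A hA t ht hAh)
  have hgnorm : ∀ A : ℝ, 0 ≤ A → ∀ t ∈ Ici (0:ℝ),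
      (∀ u, t ≤ u → 0 ≤ u → ‖h u‖ ≤ A * w u) →
      ‖(t : ℂ) * cInt σk fun s => h (t + s) / ((w s : ℝ) : ℂ)‖ ≤
        C * A * jmass σk * v t := by
    intro A hA t ht hAh
    have ht0 : (0:ℝ) ≤ t := ht
    rw [hGval t ht, norm_mul, Complex.norm_real, Real.norm_eq_abs, abs_of_nonneg ht0]
    calc t * ‖Gfun σk w ((Ici (0:ℝ)).indicator h) t‖ ≤ t * (A * w t * jmass σk) :=
          mul_le_mul_of_nonneg_left (hGnorm A hA t ht hAh) ht0
      _ = (t * w t) * (A * jmass σk) := by ring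
      _ ≤ (C * v t) * (A * jmass σk) :=
          mul_le_mul_of_nonneg_right (hC t ht) (mul_nonneg hA (jmass_nonneg σk))
      _ = C * A * jmass σk * v t := by ring
  refine ⟨?_, ⟨C * D₀ * jmass σk, fun t ht => hgnorm D₀ hD₀0 t ht
      (fun u _ hu0 => hD₀ u hu0)⟩, ?_⟩
  · -- continuity
    have hGcont : ContinuousOn (Gfun σk w ((Ici (0:ℝ)).indicator h)) (Ici 0) := by
      intro t₀ ht₀
      have ht₀0 : (0:ℝ) ≤ t₀ := ht₀
      have hGsum : ∀ t, Gfun σk w ((Ici (0:ℝ)).indicator h) t =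
          ∑ j, jcoef j * ∫ s, Ffun w ((Ici (0:ℝ)).indicator h) t s ∂ jparts σk j :=
        fun t => cInt_eq_sum σk _
      have hcont : ContinuousWithinAt (fun t =>
          ∑ j, jcoef j * ∫ s, Ffun w ((Ici (0:ℝ)).indicator h) t s ∂ jparts σk j)
          (Ici 0) t₀ := by
        refine tendsto_finset_sum _ fun j _ => ?_
        refine Tendsto.const_mul _ ?_
        obtain ⟨Cl, hCl⟩ := hwloc (t₀ + 1)
        refine continuousWithinAt_of_dominated
          (bound := fun _ => D₀ * max Cl 0) ?_ ?_ ?_ ?_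
        · refine Eventually.of_forall fun t => ?_
          have : Measurable (Ffun w ((Ici (0:ℝ)).indicator h) t) :=
            ((hHmeas.comp (measurable_const.add measurable_id)).div
              (Complex.measurable_ofReal.comp hwmeas)).indicator measurableSet_Ici
          exact this.aestronglyMeasurable
        · have hmem : Ici (0:ℝ) ∩ Iio (t₀ + 1) ∈ nhdsWithin t₀ (Ici 0) :=
            inter_mem self_mem_nhdsWithin
              (mem_nhdsWithin_of_mem_nhds (Iio_mem_nhds (lt_add_one t₀)))
          refine eventually_iff_exists_mem.2 ⟨_, hmem, fun t htmem => ?_⟩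
          refine Eventually.of_forall fun s => ?_
          have ht : t ∈ Ici (0:ℝ) := htmem.1
          have hwt : w t ≤ Cl := (hCl t ⟨htmem.1, le_of_lt htmem.2⟩).1
          calc ‖Ffun w ((Ici (0:ℝ)).indicator h) t s‖ ≤ D₀ * w t :=
                hFnorm D₀ hD₀0 t ht (fun u _ hu0 => hD₀ u hu0) s
            _ ≤ D₀ * max Cl 0 :=
                mul_le_mul_of_nonneg_left (hwt.trans (le_max_left _ _)) hD₀0
        · exact integrable_const _
        · refine Eventually.of_forall fun s => ?_
          by_cases hs : s ∈ Ici (0:ℝ)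
          · have he : (fun t => Ffun w ((Ici (0:ℝ)).indicator h) t s) =
                fun t => (Ici (0:ℝ)).indicator h (t + s) / ((w s : ℝ) : ℂ) := by
              funext t
              rw [Ffun_of_mem w _ t hs]
            rw [he]
            have hs0 : (0:ℝ) ≤ s := hs
            have hbase : ContinuousWithinAt (fun t : ℝ => h (t + s)) (Ici 0) t₀ := by
              have hcomp : ContinuousWithinAt h (Ici 0) (t₀ + s) :=
                hh1 (t₀ + s) (add_nonneg ht₀0 hs0)
              have hmaps : MapsTo (fun x : ℝ => x + s) (Ici 0) (Ici 0) :=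
                fun x hx => add_nonneg hx hs0
              have := ContinuousWithinAt.comp (g := h) (f := fun x : ℝ => x + s)
                (s := Ici (0:ℝ)) (t := Ici (0:ℝ)) (x := t₀) hcomp
                ((continuous_add_right s).continuousWithinAt) hmaps
              exact this
            have hHcont : ContinuousWithinAt
                (fun t : ℝ => (Ici (0:ℝ)).indicator h (t + s)) (Ici 0) t₀ := by
              refine hbase.congr (fun y hy => ?_) ?_
              · exact Set.indicator_of_mem (add_nonneg hy hs0) h
              · exact Set.indicator_of_mem (add_nonneg ht₀0 hs0) h
            exact hHcont.div_const _
          · have he : (fun t => Ffun w ((Ici (0:ℝ)).indicator h) t s) =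
                fun _ => (0:ℂ) := by
              funext t
              rw [Ffun_of_not_mem w _ t hs]
            rw [he]
            exact continuousWithinAt_const
      exact hcont.congr (fun y _ => hGsum y) (hGsum t₀)
    have hmul : ContinuousOn (fun t : ℝ =>
        (t : ℂ) * Gfun σk w ((Ici (0:ℝ)).indicator h) t) (Ici 0) :=
      (Complex.continuous_ofReal.continuousOn).mul hGcont
    exact hmul.congr fun t ht => by rw [hGval t ht]
  · -- vanishing at infinity
    rw [Metric.tendsto_atTop]
    intro ε hε
    have hden : (0:ℝ) < 2 * (C * jmass σk + 1) := by
      have := jmass_nonneg σk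
      nlinarith
    set ε' : ℝ := ε / (2 * (C * jmass σk + 1)) with hε'def
    have hε' : 0 < ε' := div_pos hε hden
    obtain ⟨T, hT⟩ := Metric.tendsto_atTop.1 hh3 ε' hε'
    refine ⟨max T 0, fun t ht => ?_⟩
    have ht0 : (0:ℝ) ≤ t := le_trans (le_max_right _ _) ht
    have hbd : ‖(t : ℂ) * cInt σk fun s => h (t + s) / ((w s : ℝ) : ℂ)‖ ≤
        C * ε' * jmass σk * v t := by
      refine hgnorm ε' hε'.le t ht0 fun u hu hu0 => ?_
      have huT : T ≤ u := le_trans (le_trans (le_max_left _ _) ht) hu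
      have hdist := hT u huT
      rw [Real.dist_eq, sub_zero] at hdist
      have hlt : ‖h u‖ / w u < ε' := lt_of_abs_lt hdist
      rw [div_lt_iff₀ (hwpos u hu0)] at hlt
      linarith
    have hvt : 0 < v t := hvpos t ht0
    rw [Real.dist_eq, sub_zero]
    have hnn : 0 ≤ ‖(t : ℂ) * cInt σk fun s => h (t + s) / ((w s : ℝ) : ℂ)‖ / v t :=
      div_nonneg (norm_nonneg _) hvt.le
    rw [abs_of_nonneg hnn]
    calc ‖(t : ℂ) * cInt σk fun s => h (t + s) / ((w s : ℝ) : ℂ)‖ / v t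
        ≤ (C * ε' * jmass σk * v t) / v t := by gcongr
      _ = C * jmass σk * ε' := by field_simp
      _ = ε * ((C * jmass σk) / (2 * (C * jmass σk + 1))) := by rw [hε'def]; ring
      _ < ε * 1 := by
          refine mul_lt_mul_of_pos_left ?_ hε
          rw [div_lt_one hden]
          have hj := jmass_nonneg σk
          nlinarith
      _ = ε := mul_one ε

end Chunk6
/-- Let `(ωₙ)` be an increasing sequence of algebra weights with
`∀ n ∃ m, sup_t t ωₙ(t)/ω_m(t) < ∞` and let `μ ∈ B(ω)`. Then `D̄_μ ν = (Xν) * μ` on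
`B(ω)` is the adjoint of `T_μ` on `D(1/ω) = ⋃ₙ C₀(1/ωₙ)`,
`(T_μ h)(t) = t ∫ h(t+s) dμ(s)`: one has `∫ h d((Xν)*μ) = ∫ T_μ h dν` for all
`h ∈ D(1/ω)`, and consequently `D̄_μ` is weak-star continuous on `B(ω) = D(1/ω)*`
(continuous along every net converging weak-star against `D(1/ω)`). -/
theorem Dbar_BW_adjoint_and_weak_star_continuous (ω : ℕ → ℝ → ℝ)
    (hω : IsWeightSeq ω)
    (hwc : ∀ n : ℕ, ∃ (m : ℕ) (C : ℝ), ∀ t ∈ Ici (0 : ℝ), t * ω n t ≤ C * ω m t)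
    (σ : ℕ → ComplexMeasure ℝ) (hσ : MemBW ω σ) :
    -- the adjoint identity ⟨h, D̄_μ ν⟩ = ⟨T_μ h, ν⟩
    (∀ τ σρ : ℕ → ComplexMeasure ℝ, MemBW ω τ → MemBW ω σρ → IsXConvBW ω σ τ σρ →
      ∀ (k m : ℕ) (C : ℝ), (∀ t ∈ Ici (0 : ℝ), t * ω k t ≤ C * ω m t) →
      ∀ h : ℝ → ℂ, MemC0w ω k h →
        (cInt (σρ k) fun t => h t / ((ω k t : ℝ) : ℂ)) =
          cInt (τ m) fun t =>
            ((t : ℂ) * cInt (σ k) fun s => h (t + s) / ((ω k s : ℝ) : ℂ)) /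
              ((ω m t : ℝ) : ℂ)) ∧
    -- weak-star continuity of D̄_μ
    (∀ {ι : Type} (l : Filter ι)
        (τ : ι → ℕ → ComplexMeasure ℝ) (τ₀ : ℕ → ComplexMeasure ℝ)
        (σρ : ι → ℕ → ComplexMeasure ℝ) (σρ₀ : ℕ → ComplexMeasure ℝ),
      (∀ i, MemBW ω (τ i)) → MemBW ω τ₀ →
      (∀ i, MemBW ω (σρ i)) → MemBW ω σρ₀ →
      (∀ i, IsXConvBW ω σ (τ i) (σρ i)) → IsXConvBW ω σ τ₀ σρ₀ →
      (∀ (k : ℕ) (h : ℝ → ℂ), MemC0w ω k h →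
        Tendsto (fun i => cInt (τ i k) fun t => h t / ((ω k t : ℝ) : ℂ)) l
          (nhds (cInt (τ₀ k) fun t => h t / ((ω k t : ℝ) : ℂ)))) →
      ∀ (k : ℕ) (h : ℝ → ℂ), MemC0w ω k h →
        Tendsto (fun i => cInt (σρ i k) fun t => h t / ((ω k t : ℝ) : ℂ)) l
          (nhds (cInt (σρ₀ k) fun t => h t / ((ω k t : ℝ) : ℂ)))) := by
  obtain ⟨hω1, hω2⟩ := hω
  have hmeas : ∀ n, Measurable (ω n) := fun n => (hω1 n).1
  have hpos : ∀ n, ∀ t ∈ Ici (0:ℝ), 0 < ω n t := fun n => (hω1 n).2.1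
  have hloc : ∀ n, ∀ T : ℝ, ∃ C : ℝ, ∀ t ∈ Icc (0:ℝ) T, ω n t ≤ C ∧ 1 / ω n t ≤ C :=
    fun n => (hω1 n).2.2.1
  have hsub : ∀ n, ∀ s ∈ Ici (0:ℝ), ∀ t ∈ Ici (0:ℝ), ω n (s + t) ≤ ω n s * ω n t :=
    fun n => (hω1 n).2.2.2.2.1
  constructor
  · intro τ σρ hτ hσρ hXC k m C hCm h hh
    exact adjoint_master (σ k) (τ m) (σρ k) (hσ.1 k) (hτ.1 m) (hσρ.1 k)
      (hmeas k) (hpos k) (hsub k) (hmeas m) (hpos m) hCm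
      (fun E hE hEb => hXC k m C hCm E hE hEb) h hh.1 hh.2.1 hh.2.2
  · intro ι l τ τ₀ σρ σρ₀ hτ hτ₀ hσρ hσρ₀ hXC hXC₀ hconv k h hh
    obtain ⟨m, C, hCm⟩ := hwc k
    have hg := Tmu_props (σ k) (hσ.1 k) (hmeas k) (hpos k) (hloc k) (hsub k) (hpos m) hCm
      h hh.1 hh.2.1 hh.2.2
    set g : ℝ → ℂ := fun t : ℝ =>
      (t : ℂ) * cInt (σ k) fun s => h (t + s) / ((ω k s : ℝ) : ℂ) with hgdef
    have hgC0 : MemC0w ω m g := ⟨hg.1, hg.2.1, hg.2.2⟩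
    have hlim := hconv m g hgC0
    have key : ∀ τ' σρ' : ℕ → ComplexMeasure ℝ, MemBW ω τ' → MemBW ω σρ' →
        IsXConvBW ω σ τ' σρ' →
        (cInt (σρ' k) fun t => h t / ((ω k t : ℝ) : ℂ)) =
          cInt (τ' m) fun t => g t / ((ω m t : ℝ) : ℂ) := by
      intro τ' σρ' hτ' hσρ' hXC'
      exact adjoint_master (σ k) (τ' m) (σρ' k) (hσ.1 k) (hτ'.1 m) (hσρ'.1 k)
        (hmeas k) (hpos k) (hsub k) (hmeas m) (hpos m) hCm
        (fun E hE hEb => hXC' k m C hCm E hE hEb) h hh.1 hh.2.1 hh.2.2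
    have he1 : (fun i => cInt (σρ i k) fun t => h t / ((ω k t : ℝ) : ℂ)) =
        fun i => cInt (τ i m) fun t => g t / ((ω m t : ℝ) : ℂ) :=
      funext fun i => key _ _ (hτ i) (hσρ i) (hXC i)
    rw [he1, key _ _ hτ₀ hσρ₀ hXC₀]
    exact hlim
end Chunk5
end
end
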